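/- arXiv:1803.08755 — 3 statements merged into one kernel-verified Lean document; each statement's English description precedes it below -/
import Mathlib

section
/- Let d ≥ 4 be a composite integer with d ≠ 6, and let ℓ be the smallest prime factor of d. Then there exists a constant c > 0 (depending only on d) such that for all integers H ≥ 2, |D*_d(H) - I*_d(H)| ≤ c·H^{d/ℓ}. -/
open Polynomial Finset

/-- The height of an integer polynomial is at most `H`. -/
def HeightLe (f : ℤ[X]) (H : ℕ) : Prop := ∀ i, |f.coeff i| ≤ (H : ℤ)

/-- A polynomial is decomposable if it is a composition of two polynomials of degree `≥ 2`. -/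
def Decomposable (f : ℤ[X]) : Prop :=
  ∃ g h : ℤ[X], 2 ≤ g.natDegree ∧ 2 ≤ h.natDegree ∧ f = g.comp h

/-- `DdStar d H` is the number of decomposable integer polynomials (not necessarily monic)
of degree `d` and height at most `H`. -/
noncomputable def DdStar (d : ℕ) (H : ℕ) : ℕ :=
  Nat.card {f : ℤ[X] // f.natDegree = d ∧ f ≠ 0 ∧ HeightLe f H ∧ Decomposable f}

/-- `IdStar d e H` is the number of integer polynomials of degree `d` and height at
most `H` which are compositions `g ∘ h` of indecomposable polynomials with
`deg g = d / e` and `deg h = e`. -/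
noncomputable def IdStar (d e : ℕ) (H : ℕ) : ℕ :=
  Nat.card {f : ℤ[X] // f.natDegree = d ∧ f ≠ 0 ∧ HeightLe f H ∧
    ∃ g h : ℤ[X], ¬ Decomposable g ∧ ¬ Decomposable h ∧
      g.natDegree = d / e ∧ h.natDegree = e ∧ f = g.comp h}

set_option linter.unusedVariables false
set_option linter.unusedSectionVars false

section Aux
lemma finite_height (D H : ℕ) : {f : ℤ[X] | f.natDegree ≤ D ∧ HeightLe f H}.Finite := by
  have h1 : ((Set.univ : Set (Fin (D+1))).pi
      (fun _ => (Set.Icc (-(H:ℤ)) H))).Finite := Set.Finite.pi (fun _ => Set.finite_Icc _ _)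
  apply Set.Finite.of_finite_image (f := fun f (i : Fin (D+1)) => f.coeff i)
  · apply h1.subset
    rintro v ⟨f, ⟨hdeg, hht⟩, rfl⟩
    intro i _
    exact ⟨neg_le.mp (neg_le.mpr (abs_le.mp (hht i)).1), (abs_le.mp (hht i)).2⟩
  · rintro f ⟨hdf, -⟩ g ⟨hdg, -⟩ hfg
    ext i
    rcases le_or_gt i D with hi | hi
    · exact congrFun hfg ⟨i, Nat.lt_succ_of_le hi⟩
    · rw [Polynomial.coeff_eq_zero_of_natDegree_lt (lt_of_le_of_lt hdf hi),
        Polynomial.coeff_eq_zero_of_natDegree_lt (lt_of_le_of_lt hdg hi)]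

variable {R : Type*} [CommRing R] [Nontrivial R]

noncomputable def Pc (k : ℕ) (c : Fin (k+1) → R) : R[X] := ∑ i, C (c i) * X ^ (i:ℕ)
noncomputable def Pu (M : ℕ) (u : Fin M → R) : R[X] := ∑ j, C (u j) * X ^ ((j:ℕ)+1)

lemma eq_Pc (k : ℕ) (G : R[X]) (h : G.natDegree ≤ k) :
    G = Pc k (fun i => G.coeff (i:ℕ)) := by
  conv_lhs => rw [Polynomial.as_sum_range' G (k+1) (Nat.lt_succ_of_le h)]
  unfold Pc
  rw [← Fin.sum_univ_eq_sum_range (fun i => (monomial i) (G.coeff i)) (k+1)]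
  congr 1; ext i
  rw [Polynomial.C_mul_X_pow_eq_monomial]

lemma Pu_coeff_zero (M : ℕ) (u : Fin M → R) : (Pu M u).coeff 0 = 0 := by
  unfold Pu
  simp [finset_sum_coeff, coeff_C_mul, coeff_X_pow]

lemma Pu_coeff (M : ℕ) (u : Fin M → R) (j : Fin M) : (Pu M u).coeff ((j:ℕ)+1) = u j := by
  unfold Pu
  simp only [finset_sum_coeff, coeff_C_mul, coeff_X_pow]
  rw [Finset.sum_eq_single j]
  · simp
  · intro b _ hb
    have : (j:ℕ)+1 ≠ (b:ℕ)+1 := fun h => hb (Fin.ext (by omega))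
    simp [this]
    intro h; exact absurd (Fin.ext h).symm hb
  · simp

lemma Pu_natDegree (M : ℕ) (u : Fin M → R) : (Pu M u).natDegree ≤ M :=
  (natDegree_sum_le _ _).trans (by
    simp only [Finset.fold_max_le]
    exact ⟨Nat.zero_le _, fun j _ => (natDegree_C_mul_le _ _).trans
      (le_trans (le_of_eq (natDegree_X_pow _)) (by omega : (j:ℕ)+1 ≤ M))⟩)

lemma eq_Pu (M : ℕ) (K : R[X]) (h : K.natDegree ≤ M) (h0 : K.coeff 0 = 0) :
    K = Pu M (fun j => K.coeff ((j:ℕ)+1)) := by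
  ext n
  match n with
  | 0 => rw [h0, Pu_coeff_zero]
  | (m+1) =>
    rcases lt_or_ge m M with hm | hm
    · rw [show m + 1 = ((⟨m, hm⟩ : Fin M) : ℕ) + 1 from rfl, Pu_coeff]
    · rw [Polynomial.coeff_eq_zero_of_natDegree_lt (lt_of_le_of_lt h (by omega)),
        Polynomial.coeff_eq_zero_of_natDegree_lt (lt_of_le_of_lt (Pu_natDegree M _) (by omega))]

lemma Pc_coeff (k : ℕ) (c : Fin (k+1) → ℝ) (i : Fin (k+1)) : (Pc k c).coeff i = c i := by
  unfold Pc
  simp only [finset_sum_coeff, coeff_C_mul, coeff_X_pow]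
  rw [Finset.sum_eq_single i]
  · simp
  · intro j _ hj
    have : (i:ℕ) ≠ (j:ℕ) := fun h => hj (Fin.ext h.symm)
    simp [this]
  · simp

lemma Pc_natDegree (k : ℕ) (c : Fin (k+1) → ℝ) : (Pc k c).natDegree ≤ k :=
  (natDegree_sum_le _ _).trans (by
    simp only [Finset.fold_max_le]
    exact ⟨Nat.zero_le _, fun i _ => (natDegree_C_mul_le _ _).trans
      (by simp [natDegree_X_pow]; omega)⟩)

lemma Pu_ne_zero (M : ℕ) (u : Fin M → ℝ) (hu : u ≠ 0) : Pu M u ≠ 0 := by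
  intro h
  apply hu
  funext j
  have := Pu_coeff M u j
  rw [h] at this
  simpa using this.symm

lemma comp_ne_zero (k M : ℕ) (c : Fin (k+1) → ℝ) (u : Fin M → ℝ) (hc : c ≠ 0) (hu : u ≠ 0) :
    (Pc k c).comp (Pu M u) ≠ 0 := by
  rw [Ne, Polynomial.comp_eq_zero_iff]
  push_neg
  constructor
  · intro h
    apply hc; funext i
    have := Pc_coeff k c i
    rw [h] at this
    simpa using this.symm
  · intro _
    intro h
    apply Pu_ne_zero M u hu
    rw [h, Pu_coeff_zero, map_zero]

lemma Pu_coeff_cont (M n : ℕ) : Continuous fun u : Fin M → ℝ => (Pu M u).coeff n := by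
  unfold Pu
  simp only [finset_sum_coeff, coeff_C_mul, coeff_X_pow]
  exact continuous_finset_sum _ (fun j _ => by
    by_cases h : n = (j:ℕ)+1 <;> simp [h] <;> fun_prop)

lemma Pu_pow_coeff_cont (M i n : ℕ) : Continuous fun u : Fin M → ℝ => ((Pu M u)^i).coeff n := by
  induction i generalizing n with
  | zero => simp only [pow_zero]; exact continuous_const
  | succ i ih =>
      simp only [pow_succ, coeff_mul]
      exact continuous_finset_sum _ (fun p _ => (ih p.1).mul (Pu_coeff_cont M p.2))

lemma comp_eq_sum (k M : ℕ) (c : Fin (k+1) → ℝ) (u : Fin M → ℝ) :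
    (Pc k c).comp (Pu M u) = ∑ i, C (c i) * (Pu M u) ^ (i:ℕ) := by
  unfold Pc
  rw [Polynomial.comp, eval₂_finset_sum]
  congr 1; ext i
  simp [eval₂_mul, eval₂_C, eval₂_X_pow, Polynomial.comp]

lemma comp_coeff_cont (k M n : ℕ) :
    Continuous fun p : (Fin (k+1) → ℝ) × (Fin M → ℝ) => ((Pc k p.1).comp (Pu M p.2)).coeff n := by
  simp only [comp_eq_sum, finset_sum_coeff, coeff_C_mul]
  exact continuous_finset_sum _ (fun i _ =>
    ((continuous_apply i).comp continuous_fst).mul ((Pu_pow_coeff_cont M i n).comp continuous_snd))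

noncomputable def Fnorm (k M : ℕ) (p : (Fin (k+1) → ℝ) × (Fin M → ℝ)) : ℝ :=
  ∑ n ∈ Finset.range (k*M+1), |((Pc k p.1).comp (Pu M p.2)).coeff n|

lemma Fnorm_cont (k M : ℕ) : Continuous (Fnorm k M) :=
  continuous_finset_sum _ (fun n _ => (comp_coeff_cont k M n).abs)

lemma Fnorm_pos (k M : ℕ) (c : Fin (k+1) → ℝ) (u : Fin M → ℝ) (hc : c ≠ 0) (hu : u ≠ 0) :
    0 < Fnorm k M (c, u) := by
  have hne := comp_ne_zero k M c u hc hu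
  have hdeg : ((Pc k c).comp (Pu M u)).natDegree < k*M+1 := by
    have := natDegree_comp (p := Pc k c) (q := Pu M u)
    have h2 := Nat.mul_le_mul (Pc_natDegree k c) (Pu_natDegree M u)
    omega
  have hterm : 0 < |((Pc k c).comp (Pu M u)).coeff ((Pc k c).comp (Pu M u)).natDegree| := by
    rw [abs_pos, ← Polynomial.leadingCoeff]
    exact leadingCoeff_ne_zero.mpr hne
  calc (0:ℝ) < _ := hterm
    _ ≤ Fnorm k M (c, u) :=
      Finset.single_le_sum (f := fun n => |((Pc k c).comp (Pu M u)).coeff n|)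
        (fun n _ => abs_nonneg _) (Finset.mem_range.mpr hdeg)

lemma Fnorm_smul (k M : ℕ) (a : ℝ) (c : Fin (k+1) → ℝ) (u : Fin M → ℝ) :
    Fnorm k M (a • c, u) = |a| * Fnorm k M (c, u) := by
  unfold Fnorm
  rw [Finset.mul_sum]
  congr 1; ext n
  have : Pc k (a • c) = C a * Pc k c := by
    unfold Pc
    rw [Finset.mul_sum]
    congr 1; ext i
    simp [Pi.smul_apply, smul_eq_mul, C_mul, mul_assoc]
  rw [this, mul_comp, C_comp, coeff_C_mul, abs_mul]

lemma Fnorm_nonneg (k M : ℕ) (p) : 0 ≤ Fnorm k M p :=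
  Finset.sum_nonneg (fun n _ => abs_nonneg _)

lemma lemA (k M : ℕ) (hM : 1 ≤ M) :
    ∃ γ : ℝ, 0 < γ ∧ ∀ (c : Fin (k+1) → ℝ) (u : Fin M → ℝ), ‖u‖ = 1 →
      ∀ i, γ * |c i| ≤ Fnorm k M (c, u) := by
  obtain ⟨p₀, hp₀S, hmin⟩ := (isCompact_sphere (0 : Fin (k+1) → ℝ) 1 |>.prod
      (isCompact_sphere (0 : Fin M → ℝ) 1)).exists_isMinOn
    (by
      haveI : Nonempty (Fin M) := ⟨⟨0, hM⟩⟩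
      refine Set.Nonempty.prod ?_ ?_ <;>
      · refine ⟨Function.const _ 1, ?_⟩
        simp [Function.const])
    ((Fnorm_cont k M).continuousOn)
  obtain ⟨hc₀, hu₀⟩ := Set.mem_prod.mp hp₀S
  simp only [mem_sphere_iff_norm, sub_zero] at hc₀ hu₀
  have hγ₀ : 0 < Fnorm k M p₀ := by
    refine Fnorm_pos k M p₀.1 p₀.2 ?_ ?_
    · intro h; rw [h] at hc₀; simp at hc₀
    · intro h; rw [h] at hu₀; simp at hu₀
  refine ⟨Fnorm k M p₀, hγ₀, fun c u hu i => ?_⟩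
  rcases eq_or_ne c 0 with rfl | hc
  · simpa using Fnorm_nonneg k M (0, u)
  · have hcn : 0 < ‖c‖ := norm_pos_iff.mpr hc
    have hmem : (‖c‖⁻¹ • c, u) ∈ Metric.sphere (0 : Fin (k+1) → ℝ) 1 ×ˢ
        Metric.sphere (0 : Fin M → ℝ) 1 := by
      constructor
      · simp [norm_smul, abs_of_pos (inv_pos.mpr hcn), inv_mul_cancel₀ hcn.ne']
      · simpa using hu
    have h1 : Fnorm k M p₀ ≤ Fnorm k M (‖c‖⁻¹ • c, u) := hmin hmem
    have h2 : Fnorm k M (c, u) = ‖c‖ * Fnorm k M (‖c‖⁻¹ • c, u) := by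
      have : c = ‖c‖ • (‖c‖⁻¹ • c) := by rw [smul_smul, mul_inv_cancel₀ hcn.ne', one_smul]
      conv_lhs => rw [this]
      rw [Fnorm_smul, abs_of_pos hcn]
    have h3 : |c i| ≤ ‖c‖ := by
      simpa using norm_le_pi_norm c i
    calc Fnorm k M p₀ * |c i| ≤ Fnorm k M (‖c‖⁻¹ • c, u) * ‖c‖ := by
          apply mul_le_mul h1 h3 (abs_nonneg _) (Fnorm_nonneg _ _ _)
      _ = Fnorm k M (c, u) := by rw [h2, mul_comm]

lemma coeff_bound (k M : ℕ) (hM : 1 ≤ M) :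
    ∃ Cγ : ℕ, 0 < Cγ ∧ ∀ (G K : ℤ[X]) (Hn : ℕ) (B : ℕ), 0 < B →
      G.natDegree ≤ k → K.natDegree ≤ M → K.coeff 0 = 0 →
      (∀ n, |(G.comp K).coeff n| ≤ (Hn:ℤ)) →
      (∀ j, |K.coeff j| ≤ (B:ℤ)) → (∃ j, |K.coeff j| = (B:ℤ)) →
      ∀ i : Fin (k+1), |G.coeff (i:ℕ)| * (B:ℤ)^(i:ℕ) ≤ (Cγ * Hn : ℤ) := by
  obtain ⟨γ, hγ, hA⟩ := lemA k M hM
  refine ⟨⌈(k*M+1)/γ⌉₊ + 1, Nat.succ_pos _, ?_⟩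
  intro G K Hn B hB hGdeg hKdeg hK0 hht hKB hex i
  obtain ⟨j₀, hj₀⟩ := hex
  set ι : ℤ →+* ℝ := Int.castRingHom ℝ with hι
  have hBrpos : (0:ℝ) < (B:ℝ) := by exact_mod_cast hB
  set c : Fin (k+1) → ℝ := fun i => (G.coeff (i:ℕ) : ℝ) * (B:ℝ)^(i:ℕ) with hc
  set u : Fin M → ℝ := fun j => (K.coeff ((j:ℕ)+1) : ℝ) / (B:ℝ) with hu
  have hj₀pos : 1 ≤ j₀ := by
    rcases Nat.eq_zero_or_pos j₀ with rfl | h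
    · rw [hK0] at hj₀; simp at hj₀; omega
    · exact h
  have hj₀le : j₀ ≤ M := by
    by_contra h
    push_neg at h
    rw [Polynomial.coeff_eq_zero_of_natDegree_lt (lt_of_le_of_lt hKdeg h)] at hj₀
    simp at hj₀; omega
  -- norm of u is 1
  have hun : ‖u‖ = 1 := by
    apply le_antisymm
    · apply pi_norm_le_iff_of_nonneg zero_le_one |>.mpr
      intro j
      rw [Real.norm_eq_abs, hu, abs_div, abs_of_pos hBrpos, div_le_one hBrpos]
      rw [← Int.cast_abs]
      exact_mod_cast hKB ((j:ℕ)+1)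
    · have h1 : |u ⟨j₀ - 1, by omega⟩| = 1 := by
        rw [hu]
        simp only
        have he : (j₀ - 1) + 1 = j₀ := by omega
        rw [he, abs_div, abs_of_pos hBrpos, div_eq_one_iff_eq hBrpos.ne',
          ← Int.cast_abs, hj₀]
        simp
      calc (1:ℝ) = |u ⟨j₀-1, by omega⟩| := h1.symm
        _ ≤ ‖u‖ := by simpa using norm_le_pi_norm u ⟨j₀-1, by omega⟩
  -- Pu = C B⁻¹ * map ι K
  have hPu : Pu M u = C ((B:ℝ))⁻¹ * K.map ι := by
    ext n
    rw [coeff_C_mul, coeff_map]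
    match n with
    | 0 => rw [Pu_coeff_zero, hK0]; simp
    | (m+1) =>
      rcases lt_or_ge m M with hm | hm
      · rw [show m + 1 = ((⟨m, hm⟩ : Fin M) : ℕ) + 1 from rfl, Pu_coeff]
        rw [hu]
        simp [div_eq_inv_mul]
      · have h1 : (Pu M u).coeff (m+1) = 0 :=
          Polynomial.coeff_eq_zero_of_natDegree_lt (lt_of_le_of_lt (Pu_natDegree M u) (by omega))
        have h2 : K.coeff (m+1) = 0 :=
          Polynomial.coeff_eq_zero_of_natDegree_lt (lt_of_le_of_lt hKdeg (by omega))
        rw [h1, h2]; simp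
  -- coefficients of composition agree with cast of integer composition
  have hcomp : ∀ n, ((Pc k c).comp (Pu M u)).coeff n = ((G.comp K).coeff n : ℝ) := by
    intro n
    rw [comp_eq_sum]
    have hG : G = ∑ i ∈ range (k+1), Polynomial.C (G.coeff i) * X^i := by
      conv_lhs => rw [Polynomial.as_sum_range' G (k+1) (Nat.lt_succ_of_le hGdeg)]
      congr 1; ext i
      rw [Polynomial.C_mul_X_pow_eq_monomial]
    have hGK : G.comp K = ∑ i ∈ range (k+1), Polynomial.C (G.coeff i) * K ^ i := by
      conv_lhs => rw [hG]
      rw [Polynomial.comp, Polynomial.eval₂_finset_sum]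
      simp only [eval₂_mul, eval₂_C, eval₂_X_pow]
    rw [hGK]
    rw [← Fin.sum_univ_eq_sum_range (fun i => Polynomial.C (G.coeff i) * K ^ i) (k+1)]
    rw [finset_sum_coeff, finset_sum_coeff]
    push_cast
    congr 1; ext i
    rw [coeff_C_mul, coeff_C_mul, hPu, mul_pow, ← C_pow, coeff_C_mul, hc]
    simp only
    rw [← Polynomial.map_pow, coeff_map]
    have hx : ((K^(i:ℕ)).coeff n : ℝ) = ι ((K ^ (i:ℕ)).coeff n) := rfl
    rw [← hx]
    push_cast
    have hcan : ((B:ℝ))^(i:ℕ) * ((B:ℝ))⁻¹^(i:ℕ) = 1 := by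
      rw [← mul_pow, mul_inv_cancel₀ hBrpos.ne', one_pow]
    linear_combination (((G.coeff (i:ℕ) : ℤ) : ℝ) * (((K ^ (i:ℕ)).coeff n : ℤ) : ℝ)) * hcan
  -- apply lemA
  have key := hA c u hun i
  have hF : Fnorm k M (c, u) ≤ (k*M+1) * Hn := by
    unfold Fnorm
    calc ∑ n ∈ range (k*M+1), |((Pc k c).comp (Pu M u)).coeff n|
        ≤ ∑ _n ∈ range (k*M+1), (Hn:ℝ) := by
          apply Finset.sum_le_sum
          intro n _
          rw [hcomp n, ← Int.cast_abs]
          exact_mod_cast hht n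
      _ = (k*M+1) * Hn := by simp [mul_comm]
  have hci : |c i| = ((|G.coeff (i:ℕ)| * (B:ℤ)^(i:ℕ) : ℤ) : ℝ) := by
    rw [hc]
    push_cast
    rw [abs_mul, abs_of_pos (by positivity : (0:ℝ) < (B:ℝ)^(i:ℕ))]
  have hreal : ((|G.coeff (i:ℕ)| * (B:ℤ)^(i:ℕ) : ℤ) : ℝ) ≤ ((⌈(k*M+1)/γ⌉₊ + 1 : ℕ) : ℝ) * Hn := by
    rw [← hci]
    have h2 : |c i| ≤ (k*M+1)/γ * Hn := by
      rw [div_mul_eq_mul_div, le_div_iff₀ hγ, mul_comm (|c i|) γ] at *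
      calc γ * |c i| ≤ Fnorm k M (c, u) := key
        _ ≤ (k*M+1) * Hn := hF
        _ = (k*M+1 : ℝ) * Hn := by norm_num
    calc |c i| ≤ (k*M+1)/γ * Hn := h2
      _ ≤ ((⌈(k*M+1)/γ⌉₊ + 1 : ℕ) : ℝ) * Hn := by
          apply mul_le_mul_of_nonneg_right _ (Nat.cast_nonneg _)
          push_cast
          calc ((k:ℝ)*M+1)/γ ≤ ⌈((k:ℝ)*M+1)/γ⌉₊ := Nat.le_ceil _
            _ ≤ ⌈((k:ℝ)*M+1)/γ⌉₊ + 1 := by norm_num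
  exact_mod_cast hreal

lemma Tcard_bound (k M W : ℕ) (hk : 1 ≤ k) (hW : 1 ≤ W) :
    ∑ B ∈ (Finset.Icc 1 W).filter (fun B => B^k ≤ W),
      ((∏ i : Fin (k+1), (2*(W / B^(i:ℕ))+1)) * (2*B+1)^M)
    ≤ 3^(k+1+M) * W^(k+1+ ((M - k*(k+1)/2) + k)/k) := by
  set Sk := k*(k+1)/2 with hSk
  set E := M - Sk with hE
  set e := (E+k)/k with he
  set filt := (Finset.Icc 1 W).filter (fun B => B^k ≤ W) with hfilt
  -- per-term bound
  have hterm : ∀ B ∈ filt, ((∏ i : Fin (k+1), (2*(W / B^(i:ℕ))+1)) * (2*B+1)^M)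
      ≤ 3^(k+1+M) * W^(k+1) * B^E := by
    intro B hB
    simp only [hfilt, Finset.mem_filter, Finset.mem_Icc] at hB
    obtain ⟨⟨hB1, _⟩, hBk⟩ := hB
    have hBiW : ∀ i : Fin (k+1), B^(i:ℕ) ≤ W := by
      intro i
      calc B^(i:ℕ) ≤ B^k := Nat.pow_le_pow_right hB1 (by omega)
        _ ≤ W := hBk
    have h1 : (∏ i : Fin (k+1), (2*(W / B^(i:ℕ))+1)) ≤ 3^(k+1) * ∏ i : Fin (k+1), (W / B^(i:ℕ)) := by
      rw [show (3:ℕ)^(k+1) = ∏ _i : Fin (k+1), 3 by rw [Finset.prod_const]; simp, ← Finset.prod_mul_distrib]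
      apply Finset.prod_le_prod'
      intro i _
      have : 1 ≤ W / B^(i:ℕ) := (Nat.one_le_div_iff (Nat.pow_pos (by omega))).mpr (hBiW i)
      omega
    have hprodSk : (∏ i : Fin (k+1), B^(i:ℕ)) = B^Sk := by
      rw [Finset.prod_pow_eq_pow_sum]
      congr 1
      rw [hSk, Fin.sum_univ_eq_sum_range (fun i => i) (k+1)]
      rw [Finset.sum_range_id]
      simp
      rw [Nat.mul_comm]
    have hP : (∏ i : Fin (k+1), (W / B^(i:ℕ))) * B^Sk ≤ W^(k+1) := by
      rw [← hprodSk, ← Finset.prod_mul_distrib]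
      calc ∏ i : Fin (k+1), (W / B^(i:ℕ) * B^(i:ℕ)) ≤ ∏ _i : Fin (k+1), W :=
            Finset.prod_le_prod' (fun i _ => Nat.div_mul_le_self _ _)
        _ = W^(k+1) := by rw [Finset.prod_const]; simp
    have h2 : (2*B+1)^M ≤ 3^M * B^M := by
      rw [← mul_pow]
      apply Nat.pow_le_pow_left
      omega
    have hBM : B^M ≤ B^E * B^Sk := by
      rw [← pow_add]
      apply Nat.pow_le_pow_right hB1
      omega
    calc (∏ i : Fin (k+1), (2*(W / B^(i:ℕ))+1)) * (2*B+1)^M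
        ≤ (3^(k+1) * ∏ i : Fin (k+1), (W / B^(i:ℕ))) * (3^M * B^M) :=
          Nat.mul_le_mul h1 h2
      _ ≤ (3^(k+1) * ∏ i : Fin (k+1), (W / B^(i:ℕ))) * (3^M * (B^E * B^Sk)) :=
          Nat.mul_le_mul_left _ (Nat.mul_le_mul_left _ hBM)
      _ = 3^(k+1+M) * B^E * ((∏ i : Fin (k+1), (W / B^(i:ℕ))) * B^Sk) := by ring
      _ ≤ 3^(k+1+M) * B^E * W^(k+1) := Nat.mul_le_mul_left _ hP
      _ = 3^(k+1+M) * W^(k+1) * B^E := by ring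
  -- sum bound
  rcases Finset.eq_empty_or_nonempty filt with hemp | hne
  · rw [hemp]; simp
  · set N := filt.max' hne with hN
    have hNmem : N ∈ filt := filt.max'_mem hne
    have hNprops : 1 ≤ N ∧ N^k ≤ W := by
      simp only [hfilt, Finset.mem_filter, Finset.mem_Icc] at hNmem
      exact ⟨hNmem.1.1, hNmem.2⟩
    have hcard : filt.card ≤ N := by
      have : filt ⊆ Finset.Icc 1 N := by
        intro B hB
        simp only [Finset.mem_Icc]
        have hB' := hB
        simp only [hfilt, Finset.mem_filter, Finset.mem_Icc] at hB'
        exact ⟨hB'.1.1, Finset.le_max' _ _ hB⟩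
      calc filt.card ≤ (Finset.Icc 1 N).card := Finset.card_le_card this
        _ = N := by rw [Nat.card_Icc]; omega
    have hEe : E + 1 ≤ k * e := by
      have h1 := Nat.div_add_mod (E+k) k
      have h2 : (E+k) % k < k := Nat.mod_lt _ (by omega)
      have h3 : k * e = k * ((E+k)/k) := by rw [he]
      omega
    calc ∑ B ∈ filt, ((∏ i : Fin (k+1), (2*(W / B^(i:ℕ))+1)) * (2*B+1)^M)
        ≤ ∑ B ∈ filt, 3^(k+1+M) * W^(k+1) * B^E := Finset.sum_le_sum hterm
      _ ≤ ∑ _B ∈ filt, 3^(k+1+M) * W^(k+1) * N^E := by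
          apply Finset.sum_le_sum
          intro B hB
          exact Nat.mul_le_mul_left _ (Nat.pow_le_pow_left (Finset.le_max' _ _ hB) E)
      _ = filt.card * (3^(k+1+M) * W^(k+1) * N^E) := by rw [Finset.sum_const, smul_eq_mul]
      _ ≤ N * (3^(k+1+M) * W^(k+1) * N^E) := Nat.mul_le_mul_right _ hcard
      _ = 3^(k+1+M) * W^(k+1) * N^(E+1) := by ring
      _ ≤ 3^(k+1+M) * W^(k+1) * W^e := by
          apply Nat.mul_le_mul_left
          calc N^(E+1) ≤ N^(k*e) := Nat.pow_le_pow_right hNprops.1 hEe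
            _ = (N^k)^e := by rw [pow_mul]
            _ ≤ W^e := Nat.pow_le_pow_left hNprops.2 e
      _ = 3^(k+1+M) * W^(k+1+e) := by rw [pow_add]; ring

lemma card_SM (k M : ℕ) (hk : 2 ≤ k) (hM : 3 ≤ M) :
    ∃ C : ℕ, 0 < C ∧ ∀ H : ℕ, 1 ≤ H →
      ({f : ℤ[X] | HeightLe f H ∧ ∃ G K : ℤ[X], f = G.comp K ∧ G.natDegree = k ∧
        K.natDegree = M}).ncard
      ≤ C * H ^ (k + 1 + ((M - k*(k+1)/2) + k)/k) := by
  obtain ⟨Cγ, hCγpos, hcb⟩ := coeff_bound k M (by omega)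
  set e := ((M - k*(k+1)/2) + k)/k with he
  refine ⟨3^(k+1+M) * Cγ^(k+1+e), by positivity, fun H hH => ?_⟩
  set W := Cγ * H with hW
  have hW1 : 1 ≤ W := by
    calc 1 = 1*1 := by omega
    _ ≤ Cγ * H := Nat.mul_le_mul hCγpos hH
  set S := {f : ℤ[X] | HeightLe f H ∧ ∃ G K : ℤ[X], f = G.comp K ∧ G.natDegree = k ∧
    K.natDegree = M} with hS
  -- normalized representation, as a total function
  have hrep : ∀ f : ℤ[X], ∃ p : ℤ[X] × ℤ[X], f ∈ S →
      (f = p.1.comp p.2 ∧ p.1.natDegree = k ∧ p.2.natDegree = M ∧ p.2.coeff 0 = 0) := by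
    intro f
    by_cases hf : f ∈ S
    · obtain ⟨-, G, K, hcomp, hG, hK⟩ := hf
      refine ⟨(G.comp (X + C (K.coeff 0)), K - C (K.coeff 0)), fun _ => ⟨?_, ?_, ?_, ?_⟩⟩
      · rw [Polynomial.comp_assoc, Polynomial.add_comp, Polynomial.X_comp, Polynomial.C_comp,
          sub_add_cancel, hcomp]
      · rw [Polynomial.natDegree_comp, Polynomial.natDegree_X_add_C, mul_one, hG]
      · rw [Polynomial.natDegree_sub_C, hK]
      · simp
    · exact ⟨(0,0), fun h => absurd h hf⟩
  choose rep hrep using hrep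
  -- the encoding map
  set Φ : ℤ[X] → (Fin (k+1) → ℤ) × (Fin M → ℤ) :=
    fun f => (fun i => (rep f).1.coeff (i:ℕ), fun j => (rep f).2.coeff ((j:ℕ)+1)) with hΦ
  -- injectivity on S
  have hinj : Set.InjOn Φ S := by
    intro f1 h1 f2 h2 heq
    obtain ⟨e1, d1, dd1, z1⟩ := hrep f1 h1
    obtain ⟨e2, d2, dd2, z2⟩ := hrep f2 h2
    have hG1 : (rep f1).1 = Pc k (Φ f1).1 := eq_Pc k _ (le_of_eq d1)
    have hK1 : (rep f1).2 = Pu M (Φ f1).2 := eq_Pu M _ (le_of_eq dd1) z1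
    have hG2 : (rep f2).1 = Pc k (Φ f2).1 := eq_Pc k _ (le_of_eq d2)
    have hK2 : (rep f2).2 = Pu M (Φ f2).2 := eq_Pu M _ (le_of_eq dd2) z2
    rw [e1, e2, hG1, hK1, hG2, hK2, heq]
  -- the target finset
  set T : Finset ((Fin (k+1) → ℤ) × (Fin M → ℤ)) :=
    ((Finset.Icc 1 W).filter (fun B => B^k ≤ W)).biUnion (fun B =>
      (Fintype.piFinset (fun i : Fin (k+1) =>
        Finset.Icc (-((W / B^(i:ℕ) : ℕ) : ℤ)) ((W / B^(i:ℕ) : ℕ) : ℤ))) ×ˢ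
      (Fintype.piFinset (fun _ : Fin M => Finset.Icc (-(B:ℤ)) (B:ℤ)))) with hT
  -- mapping into T
  have hmaps : ∀ f ∈ S, Φ f ∈ T := by
    intro f hf
    obtain ⟨hcomp, hGdeg, hKdeg, hK0⟩ := hrep f hf
    set G := (rep f).1
    set K := (rep f).2
    set B : ℕ := (Finset.range (M+1)).sup (fun t => (K.coeff t).natAbs) with hB
    have hKne : K.coeff M ≠ 0 := by
      have : K ≠ 0 := fun h => by rw [h] at hKdeg; simp at hKdeg; omega
      rw [← hKdeg]
      exact Polynomial.leadingCoeff_ne_zero.mpr this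
    have hB1 : 1 ≤ B := by
      have h1 : (K.coeff M).natAbs ≤ B :=
        Finset.le_sup (f := fun t => (K.coeff t).natAbs) (Finset.mem_range.mpr (Nat.lt_succ_of_le le_rfl))
      have h2 : (K.coeff M).natAbs ≠ 0 := Int.natAbs_ne_zero.mpr hKne
      omega
    have hKB : ∀ j, |K.coeff j| ≤ (B:ℤ) := by
      intro j
      rcases le_or_gt j M with hj | hj
      · have h1 : (K.coeff j).natAbs ≤ B :=
          Finset.le_sup (f := fun t => (K.coeff t).natAbs)
            (Finset.mem_range.mpr (Nat.lt_succ_of_le hj))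
        rw [Int.abs_eq_natAbs]
        exact_mod_cast h1
      · rw [Polynomial.coeff_eq_zero_of_natDegree_lt (by rw [hKdeg]; exact hj)]
        simp
    have hex : ∃ j, |K.coeff j| = (B:ℤ) := by
      obtain ⟨t, _, hts⟩ := Finset.exists_mem_eq_sup (Finset.range (M+1))
        ⟨0, Finset.mem_range.mpr (by omega)⟩ (fun t => (K.coeff t).natAbs)
      exact ⟨t, by rw [Int.abs_eq_natAbs, hB, hts]⟩
    have hht : ∀ n, |(G.comp K).coeff n| ≤ (H:ℤ) := by
      intro n; rw [← hcomp]; exact hf.1 n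
    have key := hcb G K H B (by omega) (le_of_eq hGdeg) (le_of_eq hKdeg) hK0 hht hKB hex
    have hGk : (1:ℤ) ≤ |G.coeff k| := by
      have hGne : G ≠ 0 := fun h => by rw [h] at hGdeg; simp at hGdeg; omega
      have : G.coeff k ≠ 0 := by
        rw [← hGdeg]; exact Polynomial.leadingCoeff_ne_zero.mpr hGne
      exact Int.one_le_abs this
    have hBkW : B^k ≤ W := by
      have h1 := key ⟨k, by omega⟩
      simp only [Fin.val_mk] at h1
      have h2 : ((B:ℤ))^k ≤ (W:ℤ) := by
        calc ((B:ℤ))^k = 1 * (B:ℤ)^k := (one_mul _).symm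
          _ ≤ |G.coeff k| * (B:ℤ)^k := by
              apply mul_le_mul_of_nonneg_right hGk (by positivity)
          _ ≤ ((Cγ : ℤ) * H) := h1
          _ = (W:ℤ) := by rw [hW]; push_cast; ring
      exact_mod_cast h2
    rw [hT, Finset.mem_biUnion]
    refine ⟨B, ?_, ?_⟩
    · simp only [Finset.mem_filter, Finset.mem_Icc]
      exact ⟨⟨hB1, le_trans (Nat.le_self_pow (by omega) B) hBkW⟩, hBkW⟩
    · rw [Finset.mem_product]
      constructor
      · rw [Fintype.mem_piFinset]
        intro i
        rw [Finset.mem_Icc, ← abs_le]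
        have h1 := key i
        have h2 : (G.coeff (i:ℕ)).natAbs * B^(i:ℕ) ≤ W := by
          have hcast : (((G.coeff (i:ℕ)).natAbs * B^(i:ℕ) : ℕ) : ℤ)
              = |G.coeff (i:ℕ)| * (B:ℤ)^(i:ℕ) := by
            push_cast [Int.natCast_natAbs]
            ring
          have h4 : (((G.coeff (i:ℕ)).natAbs * B^(i:ℕ) : ℕ) : ℤ) ≤ ((W:ℕ):ℤ) := by
            rw [hcast]
            calc |G.coeff (i:ℕ)| * (B:ℤ)^(i:ℕ) ≤ (Cγ:ℤ) * (H:ℤ) := h1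
              _ = ((W:ℕ):ℤ) := by rw [hW]; push_cast; ring
          exact_mod_cast h4
        have h3 : (G.coeff (i:ℕ)).natAbs ≤ W / B^(i:ℕ) :=
          (Nat.le_div_iff_mul_le (Nat.pow_pos (by omega))).mpr h2
        rw [Int.abs_eq_natAbs]
        exact_mod_cast h3
      · rw [Fintype.mem_piFinset]
        intro j
        rw [Finset.mem_Icc, ← abs_le]
        exact hKB ((j:ℕ)+1)
  -- cardinality chain
  have h1 : S.ncard ≤ T.card := by
    calc S.ncard = (Φ '' S).ncard := (Set.ncard_image_of_injOn hinj).symm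
      _ ≤ (↑T : Set ((Fin (k+1) → ℤ) × (Fin M → ℤ))).ncard := by
          apply Set.ncard_le_ncard _ T.finite_toSet
          rintro _ ⟨f, hf, rfl⟩
          exact hmaps f hf
      _ = T.card := Set.ncard_coe_finset T
  have h2 : T.card ≤ ∑ B ∈ (Finset.Icc 1 W).filter (fun B => B^k ≤ W),
      ((∏ i : Fin (k+1), (2*(W / B^(i:ℕ))+1)) * (2*B+1)^M) := by
    rw [hT]
    refine le_trans (Finset.card_biUnion_le) (Finset.sum_le_sum ?_)
    intro B _
    rw [Finset.card_product, Fintype.card_piFinset, Fintype.card_piFinset]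
    apply Nat.mul_le_mul
    · apply Finset.prod_le_prod'
      intro i _
      rw [Int.card_Icc]
      omega
    · rw [Finset.prod_const, Finset.card_univ, Fintype.card_fin]
      apply Nat.pow_le_pow_left
      rw [Int.card_Icc]
      omega
  have h3 := Tcard_bound k M W (by omega) hW1
  calc S.ncard ≤ T.card := h1
    _ ≤ _ := h2
    _ ≤ 3^(k+1+M) * W^(k+1+e) := h3
    _ = 3^(k+1+M) * Cγ^(k+1+e) * H^(k+1+e) := by rw [hW, mul_pow]; ring

lemma arith (d M : ℕ) (hd : 4 ≤ d) (hne : d ≠ 6) (hM : M ∣ d) (hlM : d.minFac < M)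
    (hMd : M < d) :
    d/M + 1 + ((M - (d/M)*((d/M)+1)/2) + d/M)/(d/M) ≤ d / d.minFac := by
  set ℓ := d.minFac with hℓ
  set k := d / M with hk
  have hd1 : d ≠ 1 := by omega
  have hℓp : Nat.Prime ℓ := Nat.minFac_prime hd1
  have hℓ2 : 2 ≤ ℓ := hℓp.two_le
  have hℓd : ℓ ∣ d := Nat.minFac_dvd d
  have hkd : k ∣ d := Nat.div_dvd_of_dvd hM
  have hkM : k * M = d := Nat.div_mul_cancel hM
  have hMpos : 0 < M := by omega
  have hk2 : 2 ≤ k := by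
    rcases Nat.lt_or_ge k 2 with h | h
    · interval_cases k <;> omega
    · exact h
  have hℓk : ℓ ≤ k := Nat.minFac_le_of_dvd hk2 hkd
  have hM3 : 3 ≤ M := by omega
  rw [Nat.le_div_iff_mul_le (by omega : 0 < ℓ), ← hkM]
  set Sk := k*(k+1)/2 with hSk
  have hSk2 : 2 * Sk = k*(k+1) := Nat.mul_div_cancel' (even_iff_two_dvd.mp (Nat.even_mul_succ_self k)) 
  set E := M - Sk with hE
  set q := E / k with hq
  have he : (E + k)/k = q + 1 := by rw [hq, Nat.add_div_right _ (by omega)]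
  rw [he]
  have hqE : k * q ≤ E := by
    rw [hq, Nat.mul_comm]
    exact Nat.div_mul_le_self E k
  rcases Nat.lt_or_ge M (Sk+1) with hMS | hMS
  · have hq0 : q = 0 := by
      have hE0 : E = 0 := by omega
      rw [hq, hE0]; simp
    rw [hq0]
    rcases Nat.lt_or_ge (ℓ+1) M with hMℓ | hMℓ
    · -- M ≥ ℓ+2
      calc (k+1+(0+1))*ℓ = k*ℓ + 2*ℓ := by ring
        _ ≤ k*ℓ + 2*k := by omega
        _ = k*(ℓ+2) := by ring
        _ ≤ k*M := Nat.mul_le_mul_left _ (by omega)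
    · -- M = ℓ+1
      have hMeq : M = ℓ+1 := by omega
      have h2ℓ : 2*ℓ ≤ k := by
        by_cases hℓeq : ℓ = 2
        · have hMe : M = 3 := by omega
          have h2d : 2 ∣ d := by rw [← hℓeq]; exact hℓd
          have hk_even : 2 ∣ k := by
            have h2km : 2 ∣ k * M := by rw [hkM]; exact h2d
            rcases (Nat.Prime.dvd_mul Nat.prime_two).mp h2km with h | h
            · exact h
            · rw [hMe] at h; omega
          have hkne2 : k ≠ 2 := fun h => hne (by rw [← hkM, h, hMe])
          omega
        · exfalso
          have hodd : Odd ℓ := hℓp.odd_of_ne_two hℓeq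
          obtain ⟨t, ht⟩ := hodd
          have hMev : 2 ∣ M := by omega
          have h2d : 2 ∣ d := hMev.trans hM
          have : ℓ ≤ 2 := Nat.minFac_le_of_dvd le_rfl h2d
          omega
      calc (k+1+(0+1))*ℓ = k*ℓ + 2*ℓ := by ring
        _ ≤ k*ℓ + k := by omega
        _ = k*(ℓ+1) := by ring
        _ = k*M := by rw [hMeq]
  · by_cases hk3 : k = 2
    · have hℓeq : ℓ = 2 := by omega
      have hSkv : Sk = 3 := by rw [hSk, hk3]
      have hM4 : 4 ≤ M := by
        rcases Nat.lt_or_ge M 4 with h | h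
        · exfalso; apply hne; rw [← hkM, hk3, (by omega : M = 3)]
        · exact h
      have hqv : q = (M-3)/2 := by rw [hq, hE, hSkv, hk3]
      rw [hk3, hℓeq]
      omega
    · have hk4 : 3 ≤ k := by omega
      have hEeq : E + Sk = M := by omega
      have hE1 : 1 ≤ E := by omega
      have step1 : (k+1+(q+1))*ℓ ≤ (k+2+q)*k :=
        le_trans (Nat.mul_le_mul (by omega : k+1+(q+1) ≤ k+2+q) hℓk) (le_refl _)
      have step2 : (k+2+q)*k = k*k+2*k+k*q := by ring
      have step3 : k*k+2*k+k*q ≤ k*k+2*k+E := by omega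
      have step4 : k*k+2*k+E ≤ k*M := by nlinarith [hSk2, hEeq, hE1, hk4]
      omega

lemma ncard_biUnion_le {ι α : Type*} (s : Finset ι) (t : ι → Set α)
    (ht : ∀ i, (t i).Finite) : (⋃ i ∈ s, t i).ncard ≤ ∑ i ∈ s, (t i).ncard := by
  classical
  induction s using Finset.induction with
  | empty => simp
  | insert a s' hx ih =>
      rw [Finset.sum_insert hx]
      refine le_trans (le_trans (le_of_eq (by rw [Finset.set_biUnion_insert])) ?_)
        (Nat.add_le_add_left ih _)
      exact le_trans (Set.ncard_union_le _ _) (le_refl _)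

theorem stmt_13 (d : ℕ) (hd : 4 ≤ d) (hcomp : ¬ Nat.Prime d) (hne : d ≠ 6) :
    ∃ c : ℝ, 0 < c ∧ ∀ H : ℕ, 2 ≤ H →
      |(DdStar d H : ℝ) - (IdStar d d.minFac H : ℝ)| ≤ c * (H : ℝ) ^ (d / d.minFac) := by
  classical
  set ℓ := d.minFac with hℓ
  have hℓp : Nat.Prime ℓ := Nat.minFac_prime (by omega)
  have hℓ2 : 2 ≤ ℓ := hℓp.two_le
  have hℓd : ℓ ∣ d := Nat.minFac_dvd d
  have hdℓ2 : 2 ≤ d / ℓ := by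
    have h1 : ℓ * (d/ℓ) = d := Nat.mul_div_cancel' hℓd
    rcases Nat.lt_or_ge (d/ℓ) 2 with h | h
    · exfalso
      rcases Nat.le_one_iff_eq_zero_or_eq_one.mp (Nat.lt_succ_iff.mp h) with hv | hv
      · rw [hv, Nat.mul_zero] at h1; omega
      · rw [hv, Nat.mul_one] at h1; exact hcomp (h1 ▸ hℓp)
    · exact h
  have hℓlt : ℓ < d := by
    have h1 : (d/ℓ) * ℓ = d := Nat.div_mul_cancel hℓd
    calc ℓ < 2*ℓ := by omega
      _ ≤ (d/ℓ)*ℓ := Nat.mul_le_mul_right ℓ hdℓ2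
      _ = d := h1
  -- divisor index set
  set DS : Finset ℕ := (Nat.divisors d).filter (fun M => ℓ < M ∧ M < d) with hDS
  -- per-M constants
  have hCM : ∀ M : ℕ, ∃ C : ℕ, 0 < C ∧ (M ∈ DS → ∀ H : ℕ, 1 ≤ H →
      ({f : ℤ[X] | HeightLe f H ∧ ∃ G K : ℤ[X], f = G.comp K ∧ G.natDegree = d/M ∧
        K.natDegree = M}).ncard
      ≤ C * H ^ (d/M + 1 + ((M - (d/M)*((d/M)+1)/2) + (d/M))/(d/M))) := by
    intro M
    by_cases hMDS : M ∈ DS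
    · have hMdvd : M ∣ d ∧ ℓ < M ∧ M < d := by
        have := hMDS
        rw [hDS, Finset.mem_filter, Nat.mem_divisors] at this
        exact ⟨this.1.1, this.2⟩
      have hk2 : 2 ≤ d / M := by
        obtain ⟨hdvd, -, hlt⟩ := hMdvd
        have h1 : (d/M) * M = d := Nat.div_mul_cancel hdvd
        rcases Nat.lt_or_ge (d/M) 2 with h | h
        · interval_cases h' : (d/M) <;> omega
        · exact h
      obtain ⟨C, hC, hbound⟩ := card_SM (d/M) M hk2 (by omega)
      exact ⟨C, hC, fun _ => hbound⟩
    · exact ⟨1, one_pos, fun h => absurd h hMDS⟩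
  choose CM hCMpos hCMb using hCM
  refine ⟨(∑ M ∈ DS, (CM M : ℝ)) + 1, by positivity, fun H hH => ?_⟩
  -- sets
  set AD : Set ℤ[X] := {f | f.natDegree = d ∧ f ≠ 0 ∧ HeightLe f H ∧ Decomposable f} with hAD
  set AI : Set ℤ[X] := {f | f.natDegree = d ∧ f ≠ 0 ∧ HeightLe f H ∧
    ∃ g h : ℤ[X], ¬ Decomposable g ∧ ¬ Decomposable h ∧
      g.natDegree = d / ℓ ∧ h.natDegree = ℓ ∧ f = g.comp h} with hAI
  set SM : ℕ → Set ℤ[X] := fun M => {f | HeightLe f H ∧ ∃ G K : ℤ[X], f = G.comp K ∧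
    G.natDegree = d/M ∧ K.natDegree = M} with hSM
  have hADcard : DdStar d H = AD.ncard := rfl
  have hAIcard : IdStar d ℓ H = AI.ncard := rfl
  -- finiteness
  have hmaster := finite_height d H
  have hADfin : AD.Finite := hmaster.subset (fun f hf => ⟨le_of_eq hf.1, hf.2.2.1⟩)
  have hAIfin : AI.Finite := hmaster.subset (fun f hf => ⟨le_of_eq hf.1, hf.2.2.1⟩)
  have hSMfin : ∀ M, (SM M).Finite := by
    intro M
    apply hmaster.subset
    rintro f ⟨hht, G, K, hcomp, hG, hK⟩
    refine ⟨?_, hht⟩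
    rw [hcomp, Polynomial.natDegree_comp, hG, hK]
    exact Nat.div_mul_le_self d M
  -- AI ⊆ AD
  have hsub : AI ⊆ AD := by
    rintro f ⟨h1, h2, h3, g, h, hgi, hhi, hgd, hhd, hcomp⟩
    exact ⟨h1, h2, h3, g, h, by omega, by omega, hcomp⟩
  -- covering
  have hcover : AD ⊆ AI ∪ ⋃ M ∈ DS, SM M := by
    rintro f ⟨hdeg, hne0, hht, g, h, hg2, hh2, hcomp⟩
    have hprod : g.natDegree * h.natDegree = d := by
      rw [← hdeg, hcomp, Polynomial.natDegree_comp]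
    set m := h.natDegree with hm
    have hmdvd : m ∣ d := Dvd.intro_left _ hprod
    have hℓm : ℓ ≤ m := Nat.minFac_le_of_dvd (by omega) hmdvd
    have hmd : m < d := by
      calc m < 2*m := by omega
        _ ≤ g.natDegree * m := Nat.mul_le_mul_right m hg2
        _ = d := hprod
    rcases eq_or_lt_of_le hℓm with hmeq | hmlt
    · -- m = ℓ
      have hgdeg : g.natDegree = d / ℓ := by
        rw [← hprod, ← hmeq]
        rw [Nat.mul_div_cancel _ (by omega)]
      by_cases hgdec : Decomposable g
      · -- regroup
        obtain ⟨u, v, hu2, hv2, huv⟩ := hgdec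
        have hcomp2 : f = u.comp ((v.comp h)) := by
          rw [hcomp, huv, Polynomial.comp_assoc]
        set M' := (v.comp h).natDegree with hM'
        have hM'v : M' = v.natDegree * m := by rw [hM', Polynomial.natDegree_comp]
        have hprod2 : u.natDegree * M' = d := by
          rw [← hdeg, hcomp2, Polynomial.natDegree_comp]
        have hM'dvd : M' ∣ d := Dvd.intro_left _ hprod2
        have hM'lt : ℓ < M' := by
          calc ℓ ≤ m := hℓm
            _ < 2*m := by omega
            _ ≤ v.natDegree * m := Nat.mul_le_mul_right m hv2
            _ = M' := hM'v.symm
        have hM'd : M' < d := by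
          calc M' < 2*M' := by omega
            _ ≤ u.natDegree * M' := Nat.mul_le_mul_right M' hu2
            _ = d := hprod2
        have hudeg : u.natDegree = d / M' := by
          rw [← hprod2, Nat.mul_div_cancel _ (by omega)]
        right
        rw [Set.mem_iUnion₂]
        refine ⟨M', ?_, hht, u, v.comp h, hcomp2, hudeg, rfl⟩
        rw [hDS, Finset.mem_filter, Nat.mem_divisors]
        exact ⟨⟨hM'dvd, by omega⟩, hM'lt, hM'd⟩
      · -- f ∈ AI : also h is indecomposable since deg h = ℓ prime
        have hhind : ¬ Decomposable h := by
          rintro ⟨a, b, ha2, hb2, hab⟩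
          have hprodl : a.natDegree * b.natDegree = ℓ := by
            rw [hmeq, hm, hab, Polynomial.natDegree_comp]
          rcases hℓp.eq_one_or_self_of_dvd a.natDegree ⟨b.natDegree, hprodl.symm⟩ with h1 | h1
          · omega
          · rw [h1] at hprodl
            have h2b : 2*ℓ ≤ ℓ * b.natDegree := by
              calc 2*ℓ = ℓ*2 := by ring
                _ ≤ ℓ*b.natDegree := Nat.mul_le_mul_left ℓ hb2
            omega
        left
        exact ⟨hdeg, hne0, hht, g, h, hgdec, hhind, hgdeg, hmeq.symm, hcomp⟩
    · -- m > ℓ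
      have hgdeg : g.natDegree = d / m := by
        rw [← hprod, Nat.mul_div_cancel _ (by omega)]
      right
      rw [Set.mem_iUnion₂]
      refine ⟨m, ?_, hht, g, h, hcomp, hgdeg, rfl⟩
      rw [hDS, Finset.mem_filter, Nat.mem_divisors]
      exact ⟨⟨hmdvd, by omega⟩, hmlt, hmd⟩
  -- counting
  have hDReal : (AD.ncard : ℝ) - AI.ncard ≤ ∑ M ∈ DS, (CM M : ℝ) * (H:ℝ)^(d/ℓ) := by
    have h1 : AD.ncard ≤ AI.ncard + (⋃ M ∈ DS, SM M).ncard := by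
      calc AD.ncard ≤ (AI ∪ ⋃ M ∈ DS, SM M).ncard :=
            Set.ncard_le_ncard hcover
              (hAIfin.union (Set.Finite.biUnion (DS.finite_toSet) (fun M _ => hSMfin M)))
        _ ≤ _ := Set.ncard_union_le _ _
    have h2 : (⋃ M ∈ DS, SM M).ncard ≤ ∑ M ∈ DS, (SM M).ncard :=
      ncard_biUnion_le DS SM hSMfin
    have h3 : ∀ M ∈ DS, ((SM M).ncard : ℝ) ≤ (CM M : ℝ) * (H:ℝ)^(d/ℓ) := by
      intro M hMDS
      have hb := hCMb M hMDS H (by omega)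
      have hMp : M ∣ d ∧ ℓ < M ∧ M < d := by
        have := hMDS
        rw [hDS, Finset.mem_filter, Nat.mem_divisors] at this
        exact ⟨this.1.1, this.2⟩
      have hexp := arith d M hd hne hMp.1 hMp.2.1 hMp.2.2
      have hpow : H ^ (d/M + 1 + ((M - (d/M)*((d/M)+1)/2) + (d/M))/(d/M)) ≤ H ^ (d/ℓ) :=
        Nat.pow_le_pow_right (by omega) hexp
      have : (SM M).ncard ≤ CM M * H ^ (d/ℓ) :=
        le_trans hb (Nat.mul_le_mul_left _ hpow)
      calc ((SM M).ncard : ℝ) ≤ ((CM M * H ^ (d/ℓ) : ℕ) : ℝ) := by exact_mod_cast this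
        _ = (CM M : ℝ) * (H:ℝ)^(d/ℓ) := by push_cast; ring
    calc (AD.ncard : ℝ) - AI.ncard ≤ ((⋃ M ∈ DS, SM M).ncard : ℝ) := by
          have : (AD.ncard : ℝ) ≤ AI.ncard + (⋃ M ∈ DS, SM M).ncard := by exact_mod_cast h1
          linarith
      _ ≤ ((∑ M ∈ DS, (SM M).ncard : ℕ) : ℝ) := by exact_mod_cast h2
      _ = ∑ M ∈ DS, ((SM M).ncard : ℝ) := by push_cast; ring
      _ ≤ ∑ M ∈ DS, (CM M : ℝ) * (H:ℝ)^(d/ℓ) := Finset.sum_le_sum h3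
  -- conclude
  rw [hADcard, hAIcard] at *
  have hID : AI.ncard ≤ AD.ncard := Set.ncard_le_ncard hsub hADfin
  rw [abs_sub_comm, abs_of_nonpos (by
    have : (AI.ncard : ℝ) ≤ AD.ncard := by exact_mod_cast hID
    linarith), neg_sub]
  calc (AD.ncard : ℝ) - AI.ncard ≤ ∑ M ∈ DS, (CM M : ℝ) * (H:ℝ)^(d/ℓ) := hDReal
    _ = (∑ M ∈ DS, (CM M : ℝ)) * (H:ℝ)^(d/ℓ) := by rw [Finset.sum_mul]
    _ ≤ ((∑ M ∈ DS, (CM M : ℝ)) + 1) * (H:ℝ)^(d/ℓ) := by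
        apply mul_le_mul_of_nonneg_right _ (by positivity)
        linarith

end Aux
end

section
/- Let d ≥ 2 be an integer. There exists a constant c > 0 (depending only on d) such that for all polynomials f, g, h ∈ ℂ[x] with f = g∘h, deg f = d, deg g = m, h(0) = 0, and a the leading coefficient of g, one has |a|·H(h)^m ≤ c·H(f). -/
open Polynomial

/-- The height of a complex polynomial: the maximum of the absolute values of its
coefficients. -/
noncomputable def cheight (f : ℂ[X]) : ℝ :=
  (Finset.range (f.natDegree + 1)).sup' (by simp) fun i => ‖f.coeff i‖

lemma coeff_le_cheight (p : ℂ[X]) {i : ℕ} (hi : i ∈ Finset.range (p.natDegree + 1)) :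
    ‖p.coeff i‖ ≤ cheight p := by
  unfold cheight; exact Finset.le_sup' (fun i => ‖p.coeff i‖) hi

lemma cheight_nonneg (p : ℂ[X]) : 0 ≤ cheight p :=
  le_trans (by positivity) (coeff_le_cheight p (i := 0) (by simp))

lemma evalA (p : ℂ[X]) (z : ℂ) (hz : ‖z‖ ≤ 1) :
    ‖p.eval z‖ ≤ (p.natDegree + 1) * cheight p := by
  rw [Polynomial.eval_eq_sum_range]
  refine le_trans (norm_sum_le _ _) ?_
  refine le_trans (Finset.sum_le_card_nsmul _ _ (cheight p) fun i hi => ?_) ?_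
  · rw [norm_mul, norm_pow]
    calc ‖p.coeff i‖ * ‖z‖ ^ i
        ≤ ‖p.coeff i‖ * 1 :=
          mul_le_mul_of_nonneg_left (pow_le_one₀ (by positivity) hz) (by positivity)
      _ ≤ _ := by rw [mul_one]; exact coeff_le_cheight p hi
  · rw [Finset.card_range, nsmul_eq_mul]
    push_cast
    exact le_refl _

lemma fourier_key {N : ℕ} {ζ : ℂ} (hζ : IsPrimitiveRoot ζ N) (p : ℂ[X])
    (hN : p.natDegree < N) {i : ℕ} (hi : i < N) :
    p.coeff i * N = ∑ k ∈ Finset.range N, p.eval (ζ ^ k) * (ζ ^ k) ^ (N - i) := by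
  have hN0 : N ≠ 0 := by omega
  have inner : ∀ j ∈ Finset.range N,
      (∑ k ∈ Finset.range N, (ζ ^ (j + (N - i))) ^ k) = if j = i then (N : ℂ) else 0 := by
    intro j hj
    rw [Finset.mem_range] at hj
    by_cases hji : j = i
    · subst hji
      rw [Nat.add_sub_cancel' hi.le, hζ.pow_eq_one]
      simp
    · rw [if_neg hji]
      set t := j + (N - i) with ht
      have h1 : ζ ^ t ≠ 1 := by
        intro h
        obtain ⟨c, hc⟩ := (hζ.pow_eq_one_iff_dvd t).mp h
        have h2N : t < 2 * N := by omega
        have ht1 : 1 ≤ t := by omega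
        rcases Nat.lt_or_ge c 2 with hc2 | hc2
        · interval_cases c <;> omega
        · have : N * 2 ≤ N * c := Nat.mul_le_mul_left N hc2
          omega
      rw [geom_sum_eq h1, ← pow_mul, mul_comm t N, pow_mul, hζ.pow_eq_one, one_pow,
        sub_self, zero_div]
  symm
  calc ∑ k ∈ Finset.range N, p.eval (ζ ^ k) * (ζ ^ k) ^ (N - i)
      = ∑ k ∈ Finset.range N, ∑ j ∈ Finset.range N,
          p.coeff j * ((ζ ^ k) ^ j * (ζ ^ k) ^ (N - i)) := by
        refine Finset.sum_congr rfl fun k _ => ?_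
        rw [Polynomial.eval_eq_sum_range' hN, Finset.sum_mul]
        exact Finset.sum_congr rfl fun j _ => by ring
    _ = ∑ j ∈ Finset.range N, ∑ k ∈ Finset.range N,
          p.coeff j * (ζ ^ (j + (N - i))) ^ k := by
        rw [Finset.sum_comm]
        refine Finset.sum_congr rfl fun j _ => Finset.sum_congr rfl fun k _ => ?_
        rw [← pow_add, ← pow_mul, mul_comm k, pow_mul]
    _ = ∑ j ∈ Finset.range N, p.coeff j * ∑ k ∈ Finset.range N, (ζ ^ (j + (N - i))) ^ k := by
        exact Finset.sum_congr rfl fun j _ => (Finset.mul_sum _ _ _).symm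
    _ = ∑ j ∈ Finset.range N, p.coeff j * (if j = i then (N : ℂ) else 0) := by
        exact Finset.sum_congr rfl fun j hj => by rw [inner j hj]
    _ = p.coeff i * N := by
        simp [Finset.sum_ite_eq', Finset.mem_range.mpr hi]

lemma exists_unit_eval_ge (p : ℂ[X]) :
    ∃ z : ℂ, ‖z‖ = 1 ∧ cheight p ≤ ‖p.eval z‖ := by
  set N := p.natDegree + 1 with hNdef
  have hN0 : N ≠ 0 := Nat.succ_ne_zero _
  have hζ : IsPrimitiveRoot (Complex.exp (2 * Real.pi * Complex.I / N)) N :=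
    Complex.isPrimitiveRoot_exp N hN0
  set ζ := Complex.exp (2 * Real.pi * Complex.I / N) with hζdef
  have habsζ : ‖ζ‖ = 1 := by
    have h1 : ‖ζ‖ ^ N = 1 := by rw [← norm_pow, hζ.pow_eq_one, norm_one]
    have h2 := norm_nonneg ζ
    rcases lt_trichotomy (‖ζ‖) 1 with h | h | h
    · exfalso
      have := pow_lt_one₀ h2 h hN0
      rw [h1] at this; exact lt_irrefl _ this
    · exact h
    · exfalso
      have := one_lt_pow₀ h hN0
      rw [h1] at this; exact lt_irrefl _ this
  -- the maximizing root of unity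
  obtain ⟨k0, hk0mem, hk0⟩ := Finset.exists_mem_eq_sup' (by simp : (Finset.range N).Nonempty)
    (fun k => ‖p.eval (ζ ^ k)‖)
  refine ⟨ζ ^ k0, by rw [norm_pow, habsζ, one_pow], ?_⟩
  -- the maximizing coefficient
  obtain ⟨i0, hi0mem, hi0⟩ := Finset.exists_mem_eq_sup' (by simp : (Finset.range N).Nonempty)
    (fun i => ‖p.coeff i‖)
  rw [show cheight p = ‖p.coeff i0‖ from hi0]
  have hi0N : i0 < N := Finset.mem_range.mp hi0mem
  have key := fourier_key hζ p (by omega) hi0N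
  have : (N : ℝ) * ‖p.coeff i0‖ ≤ (N : ℝ) * ‖p.eval (ζ ^ k0)‖ := by
    calc (N : ℝ) * ‖p.coeff i0‖
        = ‖p.coeff i0 * N‖ := by
          rw [norm_mul, Complex.norm_natCast]; ring
      _ = ‖∑ k ∈ Finset.range N, p.eval (ζ ^ k) * (ζ ^ k) ^ (N - i0)‖ := by rw [key]
      _ ≤ ∑ k ∈ Finset.range N, ‖p.eval (ζ ^ k) * (ζ ^ k) ^ (N - i0)‖ :=
          norm_sum_le _ _
      _ ≤ ∑ k ∈ Finset.range N, ‖p.eval (ζ ^ k0)‖ := by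
          refine Finset.sum_le_sum fun k hk => ?_
          rw [norm_mul, norm_pow, norm_pow, habsζ, one_pow, one_pow, mul_one]
          rw [← hk0]
          exact Finset.le_sup' (fun k => ‖p.eval (ζ ^ k)‖) hk
      _ = (N : ℝ) * ‖p.eval (ζ ^ k0)‖ := by
          rw [Finset.sum_const, Finset.card_range, nsmul_eq_mul]
  have hNpos : (0 : ℝ) < N := by positivity
  exact le_of_mul_le_mul_left this hNpos

lemma ivt_piece (p : ℂ[X]) (hp0 : p.eval 0 = 0) (z0 : ℂ) (hz0 : ‖z0‖ = 1)
    {r : ℝ} (hr0 : 0 ≤ r) (hr : r ≤ ‖p.eval z0‖) :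
    ∃ z : ℂ, ‖z‖ ≤ 1 ∧ ‖p.eval z‖ = r := by
  set φ : ℝ → ℝ := fun t => ‖p.eval ((t : ℂ) * z0)‖ with hφ
  have hcont : Continuous φ := by
    apply continuous_norm.comp
    exact p.continuous.comp (Complex.continuous_ofReal.mul continuous_const)
  have h0 : φ 0 = 0 := by simp [hφ, hp0]
  have h1 : φ 1 = ‖p.eval z0‖ := by simp [hφ]
  have hmem : r ∈ Set.Icc (φ 0) (φ 1) := by rw [h0, h1]; exact ⟨hr0, hr⟩
  have := intermediate_value_Icc (by norm_num : (0:ℝ) ≤ 1) hcont.continuousOn hmem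
  obtain ⟨t, ht, hφt⟩ := this
  refine ⟨(t : ℂ) * z0, ?_, hφt⟩
  rw [norm_mul, hz0, mul_one, Complex.norm_real, Real.norm_eq_abs]
  rw [Set.mem_Icc] at ht
  rw [abs_of_nonneg ht.1]; exact ht.2

lemma mpow_le_prod (s : Multiset ℝ) (a : ℝ) (ha : 0 ≤ a) (h : ∀ x ∈ s, a ≤ x) :
    a ^ Multiset.card s ≤ s.prod := by
  induction s using Multiset.induction_on with
  | empty => simp
  | cons x s ih =>
    rw [Multiset.card_cons, Multiset.prod_cons, pow_succ, mul_comm (a ^ _) a]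
    have hx : a ≤ x := h x (Multiset.mem_cons_self x s)
    exact mul_le_mul hx (ih fun y hy => h y (Multiset.mem_cons_of_mem hy))
      (pow_nonneg ha _) (le_trans ha hx)

lemma radius_choice (m : ℕ) (R : Multiset ℂ) (hR : Multiset.card R ≤ m) (ρ : ℝ) (hρ : 0 < ρ) :
    ∃ j ≤ m, ∀ β ∈ R, ‖β‖ ≤ ρ / 4 ^ j / 2 ∨ 2 * (ρ / 4 ^ j) ≤ ‖β‖ := by
  classical
  set P : ℕ → Prop := fun j => ∃ β ∈ R, ρ / 4 ^ j / 2 < ‖β‖ ∧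
      ‖β‖ < 2 * (ρ / 4 ^ j) with hP
  set bad : Finset ℕ := (Finset.range (m + 1)).filter P with hbad
  set F : ℕ → ℂ := fun j => if hj : P j then hj.choose else 0 with hF
  have Fspec : ∀ j ∈ bad, F j ∈ R ∧ ρ / 4 ^ j / 2 < ‖F j‖ ∧
      ‖F j‖ < 2 * (ρ / 4 ^ j) := by
    intro j hj
    have hPj : P j := (Finset.mem_filter.mp hj).2
    have := hPj.choose_spec
    simp only [hF, dif_pos hPj]
    exact ⟨this.1, this.2⟩
  have key : ∀ j ∈ bad, ∀ j' ∈ bad, j < j' → F j ≠ F j' := by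
    intro j hj j' hj' hlt heq
    obtain ⟨_, hlo, _⟩ := Fspec j hj
    obtain ⟨_, _, hhi⟩ := Fspec j' hj'
    rw [← heq] at hhi
    have h4 : (4:ℝ) ^ (j+1) ≤ 4 ^ j' := by
      apply pow_le_pow_right₀ (by norm_num) (by omega)
    have e1 : 2 * (ρ / 4 ^ (j+1)) = ρ / 4 ^ j / 2 := by rw [pow_succ]; ring
    have e2 : ρ / 4 ^ j' ≤ ρ / 4 ^ (j+1) :=
      div_le_div_of_nonneg_left hρ.le (by positivity) h4
    linarith
  have hinj : Set.InjOn F bad := by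
    intro j hj j' hj' heq
    by_contra hne
    rcases lt_or_gt_of_ne hne with hlt | hlt
    · exact key j hj j' hj' hlt heq
    · exact key j' hj' j hj hlt heq.symm
  have hcard : bad.card ≤ m := by
    have h1 : bad.card ≤ R.toFinset.card :=
      Finset.card_le_card_of_injOn F (fun j hj => Multiset.mem_toFinset.mpr (Fspec j hj).1) hinj
    exact le_trans h1 (le_trans (Multiset.toFinset_card_le R) hR)
  have : ∃ j ∈ Finset.range (m + 1), j ∉ bad := by
    by_contra hcon
    push_neg at hcon
    have : Finset.range (m + 1) ⊆ bad := fun j hj => hcon j hj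
    have := Finset.card_le_card this
    rw [Finset.card_range] at this
    omega
  obtain ⟨j, hjmem, hjbad⟩ := this
  refine ⟨j, Nat.lt_succ_iff.mp (Finset.mem_range.mp hjmem), ?_⟩
  intro β hβ
  have hnP : ¬ P j := fun hPj => hjbad (Finset.mem_filter.mpr ⟨hjmem, hPj⟩)
  simp only [hP] at hnP
  push_neg at hnP
  rcases le_or_gt (‖β‖) (ρ / 4 ^ j / 2) with hle | hgt
  · exact Or.inl hle
  · exact Or.inr (hnP β hβ hgt)

lemma abs_multiset_prod (s : Multiset ℂ) : ‖s.prod‖ = (s.map (‖·‖)).prod := by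
  induction s using Multiset.induction_on with
  | empty => simp
  | cons x s ih => simp [ih]

theorem stmt_14 (d : ℕ) (hd : 2 ≤ d) :
    ∃ c : ℝ, 0 < c ∧ ∀ (m : ℕ) (f g h : ℂ[X]), f = g.comp h → f.natDegree = d →
      g.natDegree = m → h.eval 0 = 0 →
      ‖g.leadingCoeff‖ * cheight h ^ m ≤ c * cheight f := by
  refine ⟨(d + 1) * 2 ^ d * 4 ^ (d * d), by positivity, ?_⟩
  intro m f g h hcomp hf hg hh0
  have hd' : d = m * h.natDegree := by rw [← hf, hcomp, natDegree_comp, hg]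
  have hm1 : 0 < m := by
    rcases Nat.eq_zero_or_pos m with h0 | h0
    · rw [h0, zero_mul] at hd'; omega
    · exact h0
  have hn1 : 0 < h.natDegree := by
    rcases Nat.eq_zero_or_pos h.natDegree with h0 | h0
    · rw [h0, mul_zero] at hd'; omega
    · exact h0
  have hmd : m ≤ d := by
    calc m = m * 1 := (mul_one m).symm
    _ ≤ m * h.natDegree := Nat.mul_le_mul_left m hn1
    _ = d := hd'.symm
  have hg0 : g ≠ 0 := fun h' => by rw [h', natDegree_zero] at hg; omega
  have hf0 : f ≠ 0 := fun h' => by rw [h', natDegree_zero] at hf; omega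
  have ha : 0 < ‖g.leadingCoeff‖ :=
    norm_pos_iff.mpr (leadingCoeff_ne_zero.mpr hg0)
  have hh0' : h ≠ 0 := fun h' => by rw [h', natDegree_zero] at hn1; omega
  have hHh : 0 < cheight h := by
    refine lt_of_lt_of_le ?_ (coeff_le_cheight h (i := h.natDegree) (by simp))
    rw [coeff_natDegree]
    exact norm_pos_iff.mpr (leadingCoeff_ne_zero.mpr hh0')
  obtain ⟨z0, hz0, hz0h⟩ := exists_unit_eval_ge h
  set ρ := ‖h.eval z0‖ with hρdef
  have hρ : 0 < ρ := lt_of_lt_of_le hHh hz0h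
  -- roots of g
  have hsplit : Splits g := IsAlgClosed.splits g
  have hcard : Multiset.card g.roots = m := by
    have := hsplit.natDegree_eq_card_roots
    rw [← hg, this]
  obtain ⟨j, hjm, hjprop⟩ := radius_choice m g.roots hcard.le ρ hρ
  set r := ρ / 4 ^ j with hrdef
  have hr0 : 0 < r := by positivity
  have hrρ : r ≤ ρ := div_le_self hρ.le (one_le_pow₀ (by norm_num))
  obtain ⟨z, hz1, hzr⟩ := ivt_piece h hh0 z0 hz0 hr0.le hrρ
  set w := h.eval z with hwdef
  -- lower bound on |f.eval z|
  have hfactor : ∀ β ∈ g.roots, r / 2 ≤ ‖w - β‖ := by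
    intro β hβ
    rcases hjprop β hβ with hle | hge
    · -- |β| small : |w - β| ≥ |w| - |β| ≥ r/2
      have h1 : ‖w‖ - ‖β‖ ≤ ‖w - β‖ := by
        simpa using norm_sub_norm_le w β
      rw [hzr] at h1
      linarith
    · -- |β| large : |w - β| ≥ |β| - |w| ≥ r
      have h1 : ‖β‖ - ‖w‖ ≤ ‖w - β‖ := by
        have h2 := norm_sub_norm_le β w
        rw [norm_sub_rev] at h2
        simpa using h2
      rw [hzr] at h1
      linarith
  have hprod : ‖f.eval z‖ =
      ‖g.leadingCoeff‖ * (g.roots.map fun β => ‖w - β‖).prod := by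
    rw [hcomp, eval_comp, ← hwdef]
    conv_lhs => rw [hsplit.eq_prod_roots]
    rw [eval_mul, eval_C, norm_mul, eval_multiset_prod]
    congr 1
    rw [Multiset.map_map, abs_multiset_prod, Multiset.map_map]
    exact congrArg _ (Multiset.map_congr rfl fun a _ => by simp)
  have hlow : ‖g.leadingCoeff‖ * (r / 2) ^ m ≤ ‖f.eval z‖ := by
    rw [hprod]
    refine mul_le_mul_of_nonneg_left ?_ ha.le
    have hcard2 : Multiset.card (g.roots.map fun β => ‖w - β‖) = m := by
      rw [Multiset.card_map, hcard]
    rw [← hcard2]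
    refine mpow_le_prod _ _ (by positivity) ?_
    intro x hx
    obtain ⟨β, hβ, rfl⟩ := Multiset.mem_map.mp hx
    exact hfactor β hβ
  have hup : ‖f.eval z‖ ≤ (d + 1) * cheight f := by
    have := evalA f z hz1
    rwa [hf] at this
  -- chain everything
  have hhρ' : cheight h ≤ 4 ^ d * r := by
    calc cheight h ≤ ρ := hz0h
    _ = 4 ^ j * r := by rw [hrdef]; field_simp
    _ ≤ 4 ^ d * r := by
        have : (4:ℝ) ^ j ≤ 4 ^ d := pow_le_pow_right₀ (by norm_num) (le_trans hjm hmd)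
        exact mul_le_mul_of_nonneg_right this hr0.le
  calc ‖g.leadingCoeff‖ * cheight h ^ m
      ≤ ‖g.leadingCoeff‖ * (4 ^ d * r) ^ m := by
        refine mul_le_mul_of_nonneg_left (pow_le_pow_left₀ (cheight_nonneg h) hhρ' m) ha.le
    _ = 4 ^ (d * m) * 2 ^ m * (‖g.leadingCoeff‖ * (r / 2) ^ m) := by
        clear_value r ρ
        rw [mul_pow, pow_mul]
        field_simp
        rw [div_pow]
        field_simp
    _ ≤ 4 ^ (d * d) * 2 ^ d * (‖g.leadingCoeff‖ * (r / 2) ^ m) := by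
        refine mul_le_mul_of_nonneg_right ?_ (by positivity)
        have h1 : (4:ℝ) ^ (d * m) ≤ 4 ^ (d * d) :=
          pow_le_pow_right₀ (by norm_num) (Nat.mul_le_mul_left d hmd)
        have h2 : (2:ℝ) ^ m ≤ 2 ^ d := pow_le_pow_right₀ (by norm_num) hmd
        exact mul_le_mul h1 h2 (by positivity) (by positivity)
    _ ≤ 4 ^ (d * d) * 2 ^ d * ‖f.eval z‖ := by
        exact mul_le_mul_of_nonneg_left hlow (by positivity)
    _ ≤ 4 ^ (d * d) * 2 ^ d * ((d + 1) * cheight f) := by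
        exact mul_le_mul_of_nonneg_left hup (by positivity)
    _ = (d + 1) * 2 ^ d * 4 ^ (d * d) * cheight f := by ring
end

section
/- Let d ≥ 2 be an integer. There exists a constant c > 0 (depending only on d) such that for all polynomials f, g, h ∈ ℂ[x] with f = g∘h, deg f = d, h(0) = 0, and H(h) ≥ 1, one has H(g) ≤ c·H(f). -/
open Polynomial

namespace CheightAux

open Finset

lemma cheight_nonneg (f : ℂ[X]) : 0 ≤ cheight f := by
  unfold cheight
  exact le_trans (norm_nonneg (f.coeff 0))
    (Finset.le_sup' (fun i => ‖f.coeff i‖) (Finset.mem_range.2 (Nat.succ_pos _)))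

lemma abs_coeff_le_cheight (f : ℂ[X]) (i : ℕ) : ‖f.coeff i‖ ≤ cheight f := by
  by_cases hi : i ≤ f.natDegree
  · unfold cheight
    exact Finset.le_sup' (fun i => ‖f.coeff i‖)
      (Finset.mem_range.2 (Nat.lt_succ_of_le hi))
  · rw [f.coeff_eq_zero_of_natDegree_lt (not_le.1 hi)]
    simpa using cheight_nonneg f

lemma cheight_eq_sup' (f : ℂ[X]) (N : ℕ) (h : f.natDegree ≤ N) :
    (Finset.range (N + 1)).sup' (by simp) (fun i => ‖f.coeff i‖) = cheight f := by
  apply le_antisymm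
  · exact Finset.sup'_le _ _ fun i _ => abs_coeff_le_cheight f i
  · unfold cheight
    refine Finset.sup'_le _ _ fun i hi => Finset.le_sup' (fun i => ‖f.coeff i‖) ?_
    simp only [Finset.mem_range] at hi ⊢; omega

lemma cheight_pos (f : ℂ[X]) (hf : f ≠ 0) : 0 < cheight f := by
  have h1 : f.coeff f.natDegree ≠ 0 := leadingCoeff_ne_zero.2 hf
  exact lt_of_lt_of_le (norm_pos_iff.mpr h1) (abs_coeff_le_cheight f _)

lemma mul_sup' {s : Finset ℕ} (hs : s.Nonempty) (g : ℕ → ℝ) (a : ℝ) (ha : 0 ≤ a) :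
    s.sup' hs (fun i => a * g i) = a * s.sup' hs g := by
  apply le_antisymm
  · exact Finset.sup'_le _ _ fun i hi =>
      mul_le_mul_of_nonneg_left (Finset.le_sup' _ hi) ha
  · obtain ⟨i, hi, he⟩ := Finset.exists_mem_eq_sup' hs g
    rw [he]; exact Finset.le_sup' (fun i => a * g i) hi

lemma cheight_smul (c : ℂ) (f : ℂ[X]) (hc : c ≠ 0) :
    cheight (c • f) = ‖c‖ * cheight f := by
  rw [← cheight_eq_sup' (c • f) f.natDegree (natDegree_smul_le c f),
    ← cheight_eq_sup' f f.natDegree le_rfl,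
    ← mul_sup' (by simp) (fun i => ‖f.coeff i‖) _ (norm_nonneg c)]
  refine Finset.sup'_congr _ rfl fun i _ => ?_
  rw [coeff_smul, smul_eq_mul, norm_mul]

/-- The polynomial with coefficients given by a tuple. -/
noncomputable def P (d : ℕ) (a : Fin (d + 1) → ℂ) : ℂ[X] :=
  ∑ j : Fin (d + 1), C (a j) * X ^ (j : ℕ)

lemma natDegree_P_le (d : ℕ) (a : Fin (d + 1) → ℂ) : (P d a).natDegree ≤ d := by
  refine natDegree_sum_le_of_forall_le _ _ fun j _ => ?_
  exact le_trans (natDegree_C_mul_X_pow_le _ _) (Nat.lt_succ_iff.1 j.2)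

lemma coeff_P (d : ℕ) (a : Fin (d + 1) → ℂ) (i : Fin (d + 1)) :
    (P d a).coeff i = a i := by
  unfold P
  rw [finset_sum_coeff]
  simp only [coeff_C_mul, coeff_X_pow]
  rw [Finset.sum_eq_single i]
  · simp
  · intro j _ hj
    rw [if_neg, mul_zero]
    exact fun hij => hj (Fin.ext hij.symm)
  · simp

lemma P_coeff_eq (d : ℕ) (p : ℂ[X]) (hp : p.natDegree ≤ d) :
    P d (fun i => p.coeff i) = p := by
  unfold P
  rw [Fin.sum_univ_eq_sum_range (fun n => C (p.coeff n) * X ^ n) (d + 1)]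
  simp_rw [C_mul_X_pow_eq_monomial]
  exact (p.as_sum_range' (d + 1) (by omega)).symm

lemma cont_coeff_P (d : ℕ) (i : ℕ) :
    Continuous fun a : Fin (d + 1) → ℂ => (P d a).coeff i := by
  by_cases h : i < d + 1
  · have h2 : ∀ a : Fin (d + 1) → ℂ, (P d a).coeff i = a ⟨i, h⟩ := fun a => coeff_P d a ⟨i, h⟩
    simp only [h2]
    exact continuous_apply _
  · have h2 : ∀ a : Fin (d + 1) → ℂ, (P d a).coeff i = 0 := fun a =>
      coeff_eq_zero_of_natDegree_lt (lt_of_le_of_lt (natDegree_P_le d a) (by omega))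
    simp only [h2]
    exact continuous_const

lemma cont_pow_coeff (d j : ℕ) : ∀ i : ℕ,
    Continuous fun b : Fin (d + 1) → ℂ => ((P d b) ^ j).coeff i := by
  induction j with
  | zero => intro i; simp only [pow_zero]; exact continuous_const
  | succ j ih =>
    intro i
    have h2 : ∀ b : Fin (d + 1) → ℂ, ((P d b) ^ (j + 1)).coeff i =
        ∑ x ∈ Finset.HasAntidiagonal.antidiagonal i, ((P d b) ^ j).coeff x.1 * (P d b).coeff x.2 := by
      intro b; rw [pow_succ, coeff_mul]
    simp only [h2]
    exact continuous_finset_sum _ fun x _ => (ih x.1).mul (cont_coeff_P d x.2)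

lemma cont_comp_coeff (d i : ℕ) :
    Continuous fun x : (Fin (d + 1) → ℂ) × (Fin (d + 1) → ℂ) =>
      ((P d x.1).comp (P d x.2)).coeff i := by
  have h2 : ∀ x : (Fin (d + 1) → ℂ) × (Fin (d + 1) → ℂ),
      ((P d x.1).comp (P d x.2)).coeff i
        = ∑ j : Fin (d + 1), x.1 j * ((P d x.2) ^ (j : ℕ)).coeff i := by
    intro x
    conv_lhs => rw [show P d x.1 = ∑ j : Fin (d + 1), C (x.1 j) * X ^ (j : ℕ) from rfl]
    rw [Polynomial.sum_comp, finset_sum_coeff]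
    refine Finset.sum_congr rfl fun j _ => ?_
    rw [mul_comp, C_comp, pow_comp, X_comp, coeff_C_mul]
  simp only [h2]
  exact continuous_finset_sum _ fun j _ =>
    ((continuous_apply j).comp continuous_fst).mul
      ((cont_pow_coeff d j i).comp continuous_snd)

/-- The height of the composition, as a function of coefficient tuples. -/
noncomputable def Psi (d : ℕ) (x : (Fin (d + 1) → ℂ) × (Fin (d + 1) → ℂ)) : ℝ :=
  (Finset.range (d * d + 1)).sup' (by simp) fun i =>
    ‖((P d x.1).comp (P d x.2)).coeff i‖

lemma cont_Psi (d : ℕ) : Continuous (Psi d) :=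
  Continuous.finset_sup'_apply (by simp)
    fun i _ => continuous_norm.comp (cont_comp_coeff d i)

/-- The compact set of normalized coefficient tuples. -/
def K (d : ℕ) : Set ((Fin (d + 1) → ℂ) × (Fin (d + 1) → ℂ)) :=
  (⋂ i, {x | ‖x.1 i‖ ≤ 1}) ∩ (⋂ i, {x | ‖x.2 i‖ ≤ 1}) ∩
  (⋃ i, {x | 1 ≤ ‖x.1 i‖}) ∩ (⋃ i, {x | 1 ≤ ‖x.2 i‖}) ∩
  {x | x.2 0 = 0}

lemma cont_abs_fst (d : ℕ) (i : Fin (d + 1)) :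
    Continuous fun x : (Fin (d + 1) → ℂ) × (Fin (d + 1) → ℂ) => ‖x.1 i‖ :=
  continuous_norm.comp ((continuous_apply i).comp continuous_fst)

lemma cont_abs_snd (d : ℕ) (i : Fin (d + 1)) :
    Continuous fun x : (Fin (d + 1) → ℂ) × (Fin (d + 1) → ℂ) => ‖x.2 i‖ :=
  continuous_norm.comp ((continuous_apply i).comp continuous_snd)

lemma isClosed_K (d : ℕ) : IsClosed (K d) := by
  refine (((((isClosed_iInter fun i => isClosed_le (cont_abs_fst d i) continuous_const).inter
    (isClosed_iInter fun i => isClosed_le (cont_abs_snd d i) continuous_const)).inter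
    (isClosed_iUnion_of_finite fun i => isClosed_le continuous_const (cont_abs_fst d i))).inter
    (isClosed_iUnion_of_finite fun i => isClosed_le continuous_const (cont_abs_snd d i))).inter
    (isClosed_eq ((continuous_apply 0).comp continuous_snd) continuous_const))

lemma isCompact_K (d : ℕ) : IsCompact (K d) := by
  refine IsCompact.of_isClosed_subset
    ((isCompact_closedBall (0 : Fin (d + 1) → ℂ) 1).prod
      (isCompact_closedBall (0 : Fin (d + 1) → ℂ) 1)) (isClosed_K d) ?_
  rintro ⟨a, b⟩ hx
  obtain ⟨⟨⟨⟨h1, h2⟩, -⟩, -⟩, -⟩ := hx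
  simp only [Set.mem_iInter, Set.mem_setOf_eq] at h1 h2
  constructor
  · rw [Metric.mem_closedBall, dist_pi_le_iff zero_le_one]
    intro i
    rw [Pi.zero_apply, Complex.dist_eq, sub_zero]
    exact h1 i
  · rw [Metric.mem_closedBall, dist_pi_le_iff zero_le_one]
    intro i
    rw [Pi.zero_apply, Complex.dist_eq, sub_zero]
    exact h2 i

lemma K_nonempty (d : ℕ) (hd : 2 ≤ d) : (K d).Nonempty := by
  refine ⟨⟨fun _ => 1, fun i => if i = 0 then 0 else 1⟩, ?_⟩
  have h10 : (⟨1, by omega⟩ : Fin (d + 1)) ≠ 0 := by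
    simp [Fin.ext_iff]
  refine ⟨⟨⟨⟨?_, ?_⟩, ?_⟩, ?_⟩, ?_⟩
  · simp [Set.mem_iInter]
  · simp only [Set.mem_iInter, Set.mem_setOf_eq]
    intro i
    split <;> simp
  · simp only [Set.mem_iUnion, Set.mem_setOf_eq]
    exact ⟨0, by simp⟩
  · simp only [Set.mem_iUnion, Set.mem_setOf_eq]
    exact ⟨⟨1, by omega⟩, by rw [if_neg h10]; simp⟩
  · simp

lemma Psi_pos (d : ℕ) (x : (Fin (d + 1) → ℂ) × (Fin (d + 1) → ℂ)) (hx : x ∈ K d) :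
    0 < Psi d x := by
  obtain ⟨⟨⟨⟨-, -⟩, ha⟩, hb⟩, hb0⟩ := hx
  simp only [Set.mem_iUnion, Set.mem_setOf_eq] at ha hb hb0
  obtain ⟨i, hi⟩ := ha
  obtain ⟨j, hj⟩ := hb
  have hg : P d x.1 ≠ 0 := by
    intro h0
    have := coeff_P d x.1 i
    rw [h0, coeff_zero] at this
    rw [← this] at hi
    rw [norm_zero] at hi
    linarith
  have hh : P d x.2 ≠ 0 := by
    intro h0
    have := coeff_P d x.2 j
    rw [h0, coeff_zero] at this
    rw [← this] at hj
    rw [norm_zero] at hj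
    linarith
  have hh0 : (P d x.2).coeff 0 = 0 := by
    have := coeff_P d x.2 0
    simpa [hb0] using this
  have hcomp : (P d x.1).comp (P d x.2) ≠ 0 := by
    rw [Ne, comp_eq_zero_iff]
    rintro (h0 | ⟨-, h0⟩)
    · exact hg h0
    · rw [hh0, map_zero] at h0
      exact hh h0
  have hlc : ((P d x.1).comp (P d x.2)).coeff (((P d x.1).comp (P d x.2)).natDegree) ≠ 0 :=
    leadingCoeff_ne_zero.2 hcomp
  have hmem : ((P d x.1).comp (P d x.2)).natDegree ∈ Finset.range (d * d + 1) := by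
    rw [Finset.mem_range, Nat.lt_succ_iff]
    exact le_trans natDegree_comp_le
      (Nat.mul_le_mul (natDegree_P_le d x.1) (natDegree_P_le d x.2))
  unfold Psi
  exact lt_of_lt_of_le (norm_pos_iff.mpr hlc)
    (Finset.le_sup' (fun i => ‖((P d x.1).comp (P d x.2)).coeff i‖) hmem)

lemma coeff_comp_C_mul_X (p : ℂ[X]) (m : ℂ) (i : ℕ) :
    (p.comp (C m * X)).coeff i = p.coeff i * m ^ i := by
  conv_lhs => rw [p.as_sum_range_C_mul_X_pow]
  rw [Polynomial.sum_comp, finset_sum_coeff]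
  simp only [mul_comp, C_comp, pow_comp, X_comp, mul_pow, ← C_pow, ← mul_assoc, ← C_mul,
    coeff_C_mul, coeff_X_pow]
  by_cases hi : i ≤ p.natDegree
  · rw [Finset.sum_eq_single i]
    · simp
    · intro j _ hj
      rw [if_neg (fun h => hj h.symm), mul_zero]
    · intro h
      exact absurd (Finset.mem_range.2 (Nat.lt_succ_of_le hi)) h
  · rw [Finset.sum_eq_zero, coeff_eq_zero_of_natDegree_lt (not_le.1 hi), zero_mul]
    intro j hj
    rw [Finset.mem_range, Nat.lt_succ_iff] at hj
    rw [if_neg, mul_zero]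
    omega

end CheightAux

open CheightAux in
theorem stmt_15 (d : ℕ) (hd : 2 ≤ d) :
    ∃ c : ℝ, 0 < c ∧ ∀ (f g h : ℂ[X]), f = g.comp h → f.natDegree = d →
      h.eval 0 = 0 → 1 ≤ cheight h →
      cheight g ≤ c * cheight f := by
  obtain ⟨x₀, hx₀K, hx₀min⟩ :=
    (isCompact_K d).exists_isMinOn (K_nonempty d hd) (cont_Psi d).continuousOn
  set ε := Psi d x₀ with hε_def
  have hε : 0 < ε := Psi_pos d x₀ hx₀K
  refine ⟨ε⁻¹, inv_pos.2 hε, ?_⟩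
  intro f g h hf hdeg h0 hh
  -- basic facts
  have hεinv : (0:ℝ) < ε⁻¹ := inv_pos.2 hε
  by_cases hg0 : g = 0
  · rw [hg0]
    have : cheight (0 : ℂ[X]) = 0 := by simp [cheight]
    rw [this]
    have hfne : f = 0 := by rw [hf, hg0, zero_comp]
    rw [hfne, this, mul_zero]
  have hμpos : (0:ℝ) < cheight h := lt_of_lt_of_le one_pos hh
  have hhne : h ≠ 0 := fun h0' => by simp [h0', cheight] at hμpos
  have hc0 : h.coeff 0 = 0 := by rw [coeff_zero_eq_eval_zero, h0]
  have hndh : 1 ≤ h.natDegree := by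
    by_contra hc
    push_neg at hc
    have hnd : h.natDegree = 0 := Nat.lt_one_iff.1 hc
    exact hhne (by rw [eq_C_of_natDegree_eq_zero hnd, hc0, map_zero])
  have hcompdeg : d = g.natDegree * h.natDegree := by rw [← hdeg, hf, natDegree_comp]
  have hndg_le : g.natDegree ≤ d := by
    rw [hcompdeg]
    exact Nat.le_mul_of_pos_right _ (by omega)
  have hndg_pos : 1 ≤ g.natDegree := by
    by_contra hc
    push_neg at hc
    have h0' : g.natDegree = 0 := Nat.lt_one_iff.1 hc
    rw [h0', zero_mul] at hcompdeg
    omega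
  have hndh_le : h.natDegree ≤ d := by
    rw [hcompdeg]
    exact Nat.le_mul_of_pos_left _ (by omega)
  -- normalize
  set μ : ℝ := cheight h with hμ_def
  have hμC : (μ : ℂ) ≠ 0 := by
    simp only [ne_eq, Complex.ofReal_eq_zero]
    exact ne_of_gt hμpos
  have hμabs : ‖(μ : ℂ)‖ = μ := by
    rw [Complex.norm_real, Real.norm_eq_abs, abs_of_pos hμpos]
  have hμinvabs : ‖(μ : ℂ)⁻¹‖ = μ⁻¹ := by
    rw [norm_inv, hμabs]
  set Hh : ℂ[X] := (μ : ℂ)⁻¹ • h with hHh_def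
  have hHh_height : cheight Hh = 1 := by
    rw [hHh_def, cheight_smul _ _ (inv_ne_zero hμC), hμinvabs, inv_mul_cancel₀ (ne_of_gt hμpos)]
  set gt : ℂ[X] := g.comp (C (μ : ℂ) * X) with hgt_def
  have hgt_coeff : ∀ i, gt.coeff i = g.coeff i * (μ : ℂ) ^ i := fun i =>
    coeff_comp_C_mul_X g (μ : ℂ) i
  have hgt_ne : gt ≠ 0 := by
    intro h0'
    rw [hgt_def, comp_eq_zero_iff] at h0'
    rcases h0' with h0' | ⟨-, h0'⟩
    · exact hg0 h0'
    · have : (C (μ:ℂ) * X).coeff 0 = 0 := by simp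
      rw [this, map_zero] at h0'
      have := natDegree_C_mul_X (μ : ℂ) hμC
      rw [h0'] at this
      simp at this
  set lam : ℝ := cheight gt with hlam_def
  have hlam_pos : 0 < lam := cheight_pos gt hgt_ne
  have hlamC : ((lam : ℂ)) ≠ 0 := by
    simp only [ne_eq, Complex.ofReal_eq_zero]
    exact ne_of_gt hlam_pos
  -- cheight g ≤ lam
  have hg_le_lam : cheight g ≤ lam := by
    unfold cheight
    refine Finset.sup'_le _ _ fun i _ => ?_
    have h1 : ‖g.coeff i‖ ≤ ‖gt.coeff i‖ := by
      rw [hgt_coeff i, norm_mul, norm_pow, hμabs]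
      calc ‖g.coeff i‖ = ‖g.coeff i‖ * 1 := (mul_one _).symm
        _ ≤ ‖g.coeff i‖ * μ ^ i :=
          mul_le_mul_of_nonneg_left (one_le_pow₀ hh) (norm_nonneg _)
    exact le_trans h1 (abs_coeff_le_cheight gt i)
  -- the normalized pair
  set G : ℂ[X] := ((lam : ℂ))⁻¹ • gt with hG_def
  have hG_height : cheight G = 1 := by
    rw [hG_def, cheight_smul _ _ (inv_ne_zero hlamC), norm_inv, Complex.norm_real, Real.norm_eq_abs,
      abs_of_pos hlam_pos, inv_mul_cancel₀ (ne_of_gt hlam_pos)]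
  have hndgt : gt.natDegree = g.natDegree := by
    rw [hgt_def, natDegree_comp, natDegree_C_mul_X _ hμC, mul_one]
  have hndG : G.natDegree ≤ d := by
    rw [hG_def]
    exact le_trans (natDegree_smul_le _ _) (by rw [hndgt]; exact hndg_le)
  have hndHh : Hh.natDegree ≤ d := by
    rw [hHh_def]
    exact le_trans (natDegree_smul_le _ _) hndh_le
  set a : Fin (d + 1) → ℂ := fun i => G.coeff i with ha_def
  set b : Fin (d + 1) → ℂ := fun i => Hh.coeff i with hb_def
  have hPa : P d a = G := P_coeff_eq d G hndG
  have hPb : P d b = Hh := P_coeff_eq d Hh hndHh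
  -- membership in K
  have habK : (a, b) ∈ K d := by
    have hGne : G ≠ 0 := by
      intro h0'
      rw [h0'] at hG_height
      simp [cheight] at hG_height
    have hHhne : Hh ≠ 0 := by
      intro h0'
      rw [h0'] at hHh_height
      simp [cheight] at hHh_height
    refine ⟨⟨⟨⟨?_, ?_⟩, ?_⟩, ?_⟩, ?_⟩
    · simp only [Set.mem_iInter, Set.mem_setOf_eq]
      intro i
      rw [← hG_height]
      exact abs_coeff_le_cheight G i
    · simp only [Set.mem_iInter, Set.mem_setOf_eq]
      intro i
      rw [← hHh_height]
      exact abs_coeff_le_cheight Hh i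
    · simp only [Set.mem_iUnion, Set.mem_setOf_eq]
      obtain ⟨i, hi, hie⟩ := Finset.exists_mem_eq_sup'
        (show (Finset.range (G.natDegree + 1)).Nonempty by simp)
        (fun i => ‖G.coeff i‖)
      have hile : i ≤ d := by
        rw [Finset.mem_range, Nat.lt_succ_iff] at hi
        omega
      refine ⟨⟨i, by omega⟩, ?_⟩
      show 1 ≤ ‖G.coeff i‖
      rw [← hie]
      exact le_of_eq hG_height.symm
    · simp only [Set.mem_iUnion, Set.mem_setOf_eq]
      obtain ⟨i, hi, hie⟩ := Finset.exists_mem_eq_sup'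
        (show (Finset.range (Hh.natDegree + 1)).Nonempty by simp)
        (fun i => ‖Hh.coeff i‖)
      have hile : i ≤ d := by
        rw [Finset.mem_range, Nat.lt_succ_iff] at hi
        omega
      refine ⟨⟨i, by omega⟩, ?_⟩
      show 1 ≤ ‖Hh.coeff i‖
      rw [← hie]
      exact le_of_eq hHh_height.symm
    · show b 0 = 0
      rw [hb_def]
      show Hh.coeff ((0 : Fin (d+1)) : ℕ) = 0
      rw [hHh_def, coeff_smul, Fin.val_zero, hc0, smul_zero]
  -- compute the composition
  have hcomp_eq : G.comp Hh = ((lam : ℂ))⁻¹ • f := by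
    rw [hG_def, smul_comp]
    congr 1
    rw [hgt_def, comp_assoc]
    congr 1
    rw [mul_comp, C_comp, X_comp, hHh_def, smul_eq_C_mul, ← mul_assoc, ← C_mul,
      mul_inv_cancel₀ hμC, C_1, one_mul]
    exact hf.symm
  -- evaluate Psi
  have hPsi_ab : Psi d (a, b) = lam⁻¹ * cheight f := by
    unfold Psi
    simp only [hPa, hPb, hcomp_eq]
    have hndf : (((lam : ℂ))⁻¹ • f).natDegree ≤ d * d := by
      refine le_trans (natDegree_smul_le _ _) ?_
      rw [hdeg]
      exact Nat.le_mul_of_pos_left _ (by omega)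
    rw [cheight_eq_sup' _ _ hndf, cheight_smul _ _ (inv_ne_zero hlamC), norm_inv,
      Complex.norm_real, Real.norm_eq_abs, abs_of_pos hlam_pos]
  have hge : ε ≤ lam⁻¹ * cheight f := by
    rw [← hPsi_ab]
    exact (isMinOn_iff.1 hx₀min) (a, b) habK
  -- conclude
  have h1 : ε * lam ≤ cheight f := by
    have h2 := mul_le_mul_of_nonneg_right hge (le_of_lt hlam_pos)
    rwa [mul_comm (lam⁻¹) (cheight f), mul_assoc, inv_mul_cancel₀ (ne_of_gt hlam_pos),
      mul_one] at h2
  have h3 : lam ≤ ε⁻¹ * cheight f := by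
    calc lam = ε⁻¹ * (ε * lam) := by field_simp
      _ ≤ ε⁻¹ * cheight f := mul_le_mul_of_nonneg_left h1 (le_of_lt hεinv)
  exact le_trans hg_le_lam h3
end
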